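/- arXiv:1601.00241 — 4 statements merged into one kernel-verified Lean document; each statement's English description precedes it below -/
import Mathlib

section
/- Let f be a holomorphic function on an open neighborhood of the closed disk Δ(0,2) = {ζ ∈ ℂ : |ζ| ≤ 2} and let k ≥ 0 be an integer. Then ∫_{Δ(0,2)} |f(ζ)|² dm(ζ) ≤ ((k+1)/2^{2k}) ∫_{Δ(0,2)} |ζ|^{2k} |f(ζ)|² dm(ζ). -/
open MeasureTheory Metric Set Real Finset Filter Topology
open scoped NNReal ENNReal

lemma theta_int_ne (d : ℤ) (hd : d ≠ 0) :
    ∫ θ in Ioo (-π) π, Complex.exp (d * θ * Complex.I) = 0 := by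
  rw [← integral_Ioc_eq_integral_Ioo,
    ← intervalIntegral.integral_of_le (by linarith [pi_pos] : (-π:ℝ) ≤ π)]
  have hc : (d : ℂ) * Complex.I ≠ 0 := by
    simp [Complex.ext_iff, hd]
  rw [show (fun θ : ℝ => Complex.exp (d * θ * Complex.I))
      = fun θ : ℝ => Complex.exp ((d * Complex.I) * θ) by funext θ; ring_nf]
  rw [integral_exp_mul_complex hc]
  have h1 : (d : ℂ) * Complex.I * π = (d : ℂ) * Complex.I * (-π) + d * (2 * π * Complex.I) := by
    push_cast; ring
  rw [h1, Complex.exp_add, Complex.exp_int_mul_two_pi_mul_I, mul_one]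
  push_cast
  rw [sub_self, zero_div]

lemma theta_int_zero : ∫ θ in Ioo (-π) π, (1:ℂ) = 2 * π := by
  simp [Real.volume_Ioo]
  rw [max_eq_left (by linarith [pi_pos])]
  push_cast; ring

lemma r_int (j : ℕ) : ∫ r in Ioc (0:ℝ) 2, ((r ^ j : ℝ) : ℂ)
    = (((2:ℝ) ^ (j+1) / (j+1) : ℝ) : ℂ) := by
  have h1 : ∫ r in Ioc (0:ℝ) 2, ((r ^ j : ℝ) : ℂ) = ((∫ r in Ioc (0:ℝ) 2, r ^ j : ℝ) : ℂ) :=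
    integral_ofReal
  rw [h1]
  norm_cast
  rw [← intervalIntegral.integral_of_le (by norm_num : (0:ℝ) ≤ 2), integral_pow]
  norm_num

lemma polar_reduce (n m w : ℕ) :
    ∫ ζ in closedBall (0:ℂ) 2, ((‖ζ‖ ^ w : ℝ) : ℂ) * (ζ^n * (starRingEnd ℂ) (ζ^m))
      = (∫ r in Ioc (0:ℝ) 2, ((r ^ (n+m+w+1) : ℝ) : ℂ)) *
        ∫ θ in Ioo (-π) π, Complex.exp (((n:ℤ) - (m:ℤ)) * θ * Complex.I) := by
  set G : ℂ → ℂ := fun ζ => ((‖ζ‖ ^ w : ℝ) : ℂ) * (ζ^n * (starRingEnd ℂ) (ζ^m)) with hG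
  set S : Set (ℝ × ℝ) := Ioc (0:ℝ) 2 ×ˢ Ioo (-π) π with hS
  set H : ℝ × ℝ → ℂ := fun p => ((p.1 ^ (n+m+w+1) : ℝ) : ℂ) *
      Complex.exp (((n:ℤ) - (m:ℤ)) * p.2 * Complex.I) with hH
  have hST : S ⊆ polarCoord.target := by
    rw [polarCoord_target]
    exact Set.prod_mono Ioc_subset_Ioi_self subset_rfl
  have key : ∀ p ∈ polarCoord.target,
      p.1 • (closedBall (0:ℂ) 2).indicator G (Complex.polarCoord.symm p) = S.indicator H p := by
    rintro ⟨r, θ⟩ hp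
    rw [polarCoord_target] at hp
    obtain ⟨hr, hθ⟩ := hp
    simp only [Set.mem_Ioi] at hr
    have hsymm : Complex.polarCoord.symm (r, θ) = r * Complex.exp (θ * Complex.I) := by
      rw [Complex.polarCoord_symm_apply, Complex.exp_mul_I]
      push_cast
      ring
    have hnorm : ‖Complex.polarCoord.symm (r, θ)‖ = r := by
      rw [hsymm, norm_mul, Complex.norm_real, Real.norm_of_nonneg hr.le,
        Complex.norm_exp_ofReal_mul_I, mul_one]
    by_cases h2 : r ≤ 2
    · have hmem : Complex.polarCoord.symm (r, θ) ∈ closedBall (0:ℂ) 2 := by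
        rw [mem_closedBall, dist_zero_right, hnorm]; exact h2
      have hmemS : ((r,θ) : ℝ × ℝ) ∈ S := by
        exact ⟨⟨hr, h2⟩, hθ⟩
      rw [indicator_of_mem hmem, indicator_of_mem hmemS]
      simp only [hG, hH, Complex.real_smul]
      rw [hnorm, hsymm, mul_pow, mul_pow]
      simp only [map_mul, map_pow, Complex.conj_ofReal]
      have hexp : Complex.exp (↑θ * Complex.I) ^ n *
          ((starRingEnd ℂ) (Complex.exp (↑θ * Complex.I))) ^ m
          = Complex.exp (((n:ℤ) - (m:ℤ)) * ↑θ * Complex.I) := by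
        rw [← Complex.exp_conj, ← Complex.exp_nat_mul, ← Complex.exp_nat_mul, ← Complex.exp_add]
        congr 1
        rw [map_mul, Complex.conj_I, Complex.conj_ofReal]
        push_cast; ring
      rw [show (↑r:ℂ) * (↑(r ^ w) * (↑r ^ n * Complex.exp (↑θ * Complex.I) ^ n *
            ((↑r:ℂ) ^ m * ((starRingEnd ℂ) (Complex.exp (↑θ * Complex.I))) ^ m)))
          = ((↑r:ℂ) * ↑(r^w) * ↑r^n * ↑r^m) * (Complex.exp (↑θ * Complex.I) ^ n *
            ((starRingEnd ℂ) (Complex.exp (↑θ * Complex.I))) ^ m) from by ring, hexp]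
      push_cast
      ring
    · have hmem : Complex.polarCoord.symm (r, θ) ∉ closedBall (0:ℂ) 2 := by
        rw [mem_closedBall, dist_zero_right, hnorm]; exact h2
      have hmemS : ((r,θ) : ℝ × ℝ) ∉ S := by
        intro hc; exact h2 hc.1.2
      rw [indicator_of_notMem hmem, indicator_of_notMem hmemS, smul_zero]
  calc ∫ ζ in closedBall (0:ℂ) 2, G ζ
      = ∫ ζ, (closedBall (0:ℂ) 2).indicator G ζ := by
        rw [integral_indicator measurableSet_closedBall]
    _ = ∫ p in polarCoord.target, p.1 • (closedBall (0:ℂ) 2).indicator G (Complex.polarCoord.symm p) := by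
        rw [Complex.integral_comp_polarCoord_symm]
    _ = ∫ p in polarCoord.target, S.indicator H p := by
        exact setIntegral_congr_fun polarCoord.open_target.measurableSet key
    _ = ∫ p in S, H p := by
        rw [setIntegral_indicator (by measurability), inter_eq_self_of_subset_right hST]
    _ = _ := by
        rw [hS, Measure.volume_eq_prod, ← Measure.prod_restrict]
        exact integral_prod_mul (fun r : ℝ => ((r ^ (n+m+w+1) : ℝ) : ℂ))
          (fun θ : ℝ => Complex.exp (((n:ℤ) - (m:ℤ)) * θ * Complex.I))

lemma disk_monomial_offdiag (n m w : ℕ) (hnm : n ≠ m) :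
    ∫ ζ in closedBall (0:ℂ) 2, ((‖ζ‖ ^ w : ℝ) : ℂ) * (ζ^n * (starRingEnd ℂ) (ζ^m)) = 0 := by
  have h := theta_int_ne ((n:ℤ) - m) (sub_ne_zero.2 (by exact_mod_cast hnm))
  push_cast at h
  rw [polar_reduce]
  push_cast
  rw [h, mul_zero]

noncomputable def cc (n w : ℕ) : ℝ := (2:ℝ) ^ (2*n+w+2) / (2*n+w+2) * (2*π)

lemma disk_monomial_diag (n w : ℕ) :
    ∫ ζ in closedBall (0:ℂ) 2, ((‖ζ‖ ^ w : ℝ) : ℂ) * (ζ^n * (starRingEnd ℂ) (ζ^n))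
      = ((cc n w : ℝ) : ℂ) := by
  rw [polar_reduce, sub_self]
  simp only [zero_mul, Complex.exp_zero]
  rw [theta_int_zero, r_int, cc]
  push_cast
  rw [show n + n + w + 1 + 1 = 2*n+w+2 by ring]
  ring

lemma poly_int (a : ℕ → ℂ) (N w : ℕ) :
    ∫ ζ in closedBall (0:ℂ) 2, ‖ζ‖ ^ w * ‖∑ n ∈ range N, a n * ζ ^ n‖ ^ 2
      = ∑ n ∈ range N, ‖a n‖ ^ 2 * cc n w := by
  have hcont : ∀ n m : ℕ, ContinuousOn
      (fun ζ : ℂ => ((‖ζ‖ ^ w : ℝ) : ℂ) * ((a n * (starRingEnd ℂ) (a m)) *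
        (ζ^n * (starRingEnd ℂ) (ζ^m)))) (closedBall (0:ℂ) 2) := by
    intro n m
    apply Continuous.continuousOn
    continuity
  apply Complex.ofReal_injective
  have step1 : ((∫ ζ in closedBall (0:ℂ) 2, ‖ζ‖ ^ w * ‖∑ n ∈ range N, a n * ζ ^ n‖ ^ 2 : ℝ) : ℂ)
      = ∫ ζ in closedBall (0:ℂ) 2,
          ∑ n ∈ range N, ∑ m ∈ range N, ((‖ζ‖ ^ w : ℝ) : ℂ) *
            ((a n * (starRingEnd ℂ) (a m)) * (ζ^n * (starRingEnd ℂ) (ζ^m))) := by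
    have h0 : ((∫ ζ in closedBall (0:ℂ) 2, ‖ζ‖ ^ w * ‖∑ n ∈ range N, a n * ζ ^ n‖ ^ 2 : ℝ) : ℂ)
        = ∫ ζ in closedBall (0:ℂ) 2,
            ((‖ζ‖ ^ w * ‖∑ n ∈ range N, a n * ζ ^ n‖ ^ 2 : ℝ) : ℂ) := integral_ofReal.symm
    rw [h0]
    apply setIntegral_congr_fun measurableSet_closedBall
    intro ζ _
    simp only
    push_cast
    rw [show ((‖∑ n ∈ range N, a n * ζ ^ n‖ : ℝ) : ℂ) ^ 2
        = ((‖∑ n ∈ range N, a n * ζ ^ n‖ ^ 2 : ℝ) : ℂ) by push_cast; ring]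
    rw [show ((‖∑ n ∈ range N, a n * ζ ^ n‖ ^ 2 : ℝ) : ℂ)
        = (∑ n ∈ range N, a n * ζ ^ n) * (starRingEnd ℂ) (∑ n ∈ range N, a n * ζ ^ n) by
      rw [Complex.mul_conj]; norm_cast; rw [Complex.normSq_eq_norm_sq]]
    rw [map_sum, Finset.sum_mul_sum]
    rw [Finset.mul_sum]
    apply Finset.sum_congr rfl
    intro n _
    rw [Finset.mul_sum]
    apply Finset.sum_congr rfl
    intro m _
    simp only [map_mul, map_pow]
    ring
  rw [step1]
  rw [integral_finset_sum _ (fun n _ => integrable_finset_sum _ (fun m _ =>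
    ((hcont n m).integrableOn_compact (isCompact_closedBall _ _))))]
  have swap : ∀ n ∈ range N, (∫ ζ in closedBall (0:ℂ) 2, ∑ m ∈ range N,
      ((‖ζ‖ ^ w : ℝ) : ℂ) * ((a n * (starRingEnd ℂ) (a m)) * (ζ^n * (starRingEnd ℂ) (ζ^m))))
      = ((‖a n‖^2 * cc n w : ℝ) : ℂ) := by
    intro n hn
    rw [integral_finset_sum _ (fun m _ => ((hcont n m).integrableOn_compact
      (isCompact_closedBall _ _)))]
    rw [Finset.sum_eq_single_of_mem n hn]
    · have : (fun ζ : ℂ => ((‖ζ‖ ^ w : ℝ) : ℂ) * ((a n * (starRingEnd ℂ) (a n)) *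
          (ζ^n * (starRingEnd ℂ) (ζ^n))))
          = fun ζ : ℂ => (a n * (starRingEnd ℂ) (a n)) *
            (((‖ζ‖ ^ w : ℝ) : ℂ) * (ζ^n * (starRingEnd ℂ) (ζ^n))) := by
        funext ζ; ring
      rw [this, integral_const_mul, disk_monomial_diag n w, Complex.mul_conj]
      rw [Complex.normSq_eq_norm_sq]
      push_cast
      ring
    · intro m _ hmn
      have : (fun ζ : ℂ => ((‖ζ‖ ^ w : ℝ) : ℂ) * ((a n * (starRingEnd ℂ) (a m)) *
          (ζ^n * (starRingEnd ℂ) (ζ^m))))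
          = fun ζ : ℂ => (a n * (starRingEnd ℂ) (a m)) *
            (((‖ζ‖ ^ w : ℝ) : ℂ) * (ζ^n * (starRingEnd ℂ) (ζ^m))) := by
        funext ζ; ring
      rw [this, integral_const_mul, disk_monomial_offdiag n m w (fun h => hmn (h.symm)), mul_zero]
  rw [Finset.sum_congr rfl swap]
  push_cast
  ring_nf

lemma cc_ineq (n k : ℕ) : cc n 0 ≤ ((k+1:ℝ)/2^(2*k)) * cc n (2*k) := by
  unfold cc
  have hπ := pi_pos
  have hA : (0:ℝ) < 2^(2*n+0+2) := by positivity
  have hB : (0:ℝ) < 2^(2*k) := by positivity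
  have hsplit : (2:ℝ)^(2*n+2*k+2) = 2^(2*n+0+2) * 2^(2*k) := by
    rw [← pow_add]; ring_nf
  push_cast
  have hd1 : (0:ℝ) < 2*(n:ℝ) + 0 + 2 := by positivity
  have hd2 : (0:ℝ) < 2*(n:ℝ) + 2*(k:ℝ) + 2 := by positivity
  have hrhs : ((k:ℝ)+1)/2^(2*k) * ((2:ℝ)^(2*n+2*k+2)/(2*(n:ℝ)+2*(k:ℝ)+2) * (2*π))
      = (((k:ℝ)+1) * (2:ℝ)^(2*n+0+2)/(2*(n:ℝ)+2*(k:ℝ)+2)) * (2*π) := by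
    rw [hsplit]
    field_simp
  rw [hrhs]
  have step : (2:ℝ)^(2*n+0+2)/(2*(n:ℝ)+0+2) ≤ ((k:ℝ)+1) * (2:ℝ)^(2*n+0+2)/(2*(n:ℝ)+2*(k:ℝ)+2) := by
    rw [div_le_div_iff₀ hd1 hd2]
    nlinarith [hA.le, mul_nonneg (mul_nonneg hA.le (Nat.cast_nonneg n : (0:ℝ) ≤ n)) (Nat.cast_nonneg k : (0:ℝ) ≤ k), mul_nonneg hA.le (Nat.cast_nonneg k : (0:ℝ) ≤ k)]
  exact mul_le_mul_of_nonneg_right step (by positivity)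

lemma sum_ineq (b : ℕ → ℝ) (hb : ∀ n, 0 ≤ b n) (N k : ℕ) :
    ∑ n ∈ range N, b n * cc n 0 ≤ ((k+1:ℝ)/2^(2*k)) * ∑ n ∈ range N, b n * cc n (2*k) := by
  rw [Finset.mul_sum]
  apply Finset.sum_le_sum
  intro n _
  calc b n * cc n 0 ≤ b n * (((k+1:ℝ)/2^(2*k)) * cc n (2*k)) :=
        mul_le_mul_of_nonneg_left (cc_ineq n k) (hb n)
    _ = ((k+1:ℝ)/2^(2*k)) * (b n * cc n (2*k)) := by ring

lemma tendsto_int (w : ℕ) (S : ℕ → ℂ → ℂ) (f : ℂ → ℂ) (hScont : ∀ N, Continuous (S N))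
    (C : ℝ) (hC : ∀ N, ∀ ζ ∈ closedBall (0:ℂ) 2, ‖S N ζ‖ ≤ C)
    (hu : TendstoUniformlyOn S f atTop (closedBall (0:ℂ) 2)) :
    Tendsto (fun N => ∫ ζ in closedBall (0:ℂ) 2, ‖ζ‖^w * ‖S N ζ‖^2) atTop
      (𝓝 (∫ ζ in closedBall (0:ℂ) 2, ‖ζ‖^w * ‖f ζ‖^2)) := by
  have hC0 : 0 ≤ C := le_trans (norm_nonneg _) (hC 0 0 (mem_closedBall_self (by norm_num)))
  apply tendsto_integral_of_dominated_convergence (fun _ => 2^w * C^2)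
  · intro N
    exact (Continuous.aestronglyMeasurable (by continuity))
  · exact integrableOn_const measure_closedBall_lt_top.ne
  · intro N
    filter_upwards [ae_restrict_mem measurableSet_closedBall] with ζ hζ
    have h1 : ‖ζ‖ ≤ 2 := by simpa [dist_zero_right] using hζ
    have h2 := hC N ζ hζ
    rw [Real.norm_of_nonneg (by positivity)]
    have e1 : ‖ζ‖^w ≤ 2^w := pow_le_pow_left₀ (norm_nonneg _) h1 w
    have e2 : ‖S N ζ‖^2 ≤ C^2 := pow_le_pow_left₀ (norm_nonneg _) h2 2
    have e3 : (0:ℝ) ≤ ‖S N ζ‖^2 := by positivity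
    nlinarith [pow_nonneg (norm_nonneg ζ) w]
  · filter_upwards [ae_restrict_mem measurableSet_closedBall] with ζ hζ
    exact (((hu.tendsto_at hζ).norm.pow 2)).const_mul _

/-- For `f` holomorphic on a neighborhood of the closed disk of radius 2 and `k ≥ 0`,
`∫_{Δ(0,2)} |f|² dm ≤ ((k+1)/2^{2k}) ∫_{Δ(0,2)} |ζ|^{2k} |f|² dm`. -/
theorem integral_sq_le_integral_pow_mul_sq
    (f : ℂ → ℂ) (k : ℕ) (U : Set ℂ) (hU : IsOpen U)
    (hball : closedBall (0 : ℂ) 2 ⊆ U) (hf : DifferentiableOn ℂ f U) :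
    ∫ ζ in closedBall (0 : ℂ) 2, ‖f ζ‖ ^ 2 ≤
      ((k + 1 : ℝ) / 2 ^ (2 * k)) *
        ∫ ζ in closedBall (0 : ℂ) 2, ‖ζ‖ ^ (2 * k) * ‖f ζ‖ ^ 2 := by
  -- Get a closed ball of radius > 2 inside U
  obtain ⟨δ, hδ, hsub⟩ := (isCompact_closedBall (0:ℂ) 2).exists_cthickening_subset_open hU hball
  rw [cthickening_closedBall hδ.le (by norm_num) (0:ℂ)] at hsub
  set R : NNReal := (δ + 2).toNNReal with hR
  have hRe : (R : ℝ) = δ + 2 := Real.coe_toNNReal _ (by linarith)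
  have hdiff : DifferentiableOn ℂ f (closedBall (0:ℂ) R) := hf.mono (hRe ▸ hsub)
  have hRpos : 0 < R := by
    rw [← NNReal.coe_lt_coe, hRe]; norm_num; linarith
  have hps : HasFPowerSeriesOnBall f (cauchyPowerSeries f 0 R) 0 R :=
    hdiff.hasFPowerSeriesOnBall hRpos
  set p := cauchyPowerSeries f 0 R with hp
  set a : ℕ → ℂ := fun n => p.coeff n with ha
  -- summability for the bound
  have h2R : ((2:ℝ≥0) : ℝ≥0∞) < R := by
    rw [ENNReal.coe_lt_coe, ← NNReal.coe_lt_coe, hRe]; norm_num; linarith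
  have hsum : Summable (fun n => ‖p n‖ * (2:ℝ)^n) := by
    have := p.summable_norm_mul_pow (h2R.trans_le hps.r_le)
    simpa using this
  set C : ℝ := ∑' n, ‖p n‖ * (2:ℝ)^n with hCdef
  set S : ℕ → ℂ → ℂ := fun N ζ => ∑ n ∈ range N, a n * ζ ^ n with hS
  have hScont : ∀ N, Continuous (S N) := fun N =>
    continuous_finset_sum _ fun i _ => continuous_const.mul (continuous_pow i)
  have hcoeff : ∀ n, ‖a n‖ ≤ ‖p n‖ := by
    intro n
    have h0 := (p n).le_opNorm (fun _ => (1:ℂ))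
    simp only [norm_one, Finset.prod_const_one, mul_one] at h0
    exact le_trans (le_of_eq rfl) h0
  have hCb : ∀ N, ∀ ζ ∈ closedBall (0:ℂ) 2, ‖S N ζ‖ ≤ C := by
    intro N ζ hζ
    have hζ2 : ‖ζ‖ ≤ 2 := by simpa [dist_zero_right] using hζ
    calc ‖S N ζ‖ ≤ ∑ n ∈ range N, ‖a n * ζ ^ n‖ := norm_sum_le _ _
      _ ≤ ∑ n ∈ range N, ‖p n‖ * (2:ℝ)^n := by
          apply Finset.sum_le_sum
          intro n _
          rw [norm_mul, norm_pow]
          exact mul_le_mul (hcoeff n) (pow_le_pow_left₀ (norm_nonneg _) hζ2 n)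
            (by positivity) (norm_nonneg _)
      _ ≤ C := Summable.sum_le_tsum _ (fun n _ => by positivity) hsum
  -- uniform convergence on the closed ball
  have hu : TendstoUniformlyOn S f atTop (closedBall (0:ℂ) 2) := by
    set r' : NNReal := (δ/2 + 2).toNNReal with hr'
    have hr'e : (r' : ℝ) = δ/2 + 2 := Real.coe_toNNReal _ (by linarith)
    have hr'R : ((r' : ℝ≥0) : ℝ≥0∞) < R := by
      rw [ENNReal.coe_lt_coe, ← NNReal.coe_lt_coe, hRe, hr'e]; linarith
    have h1 := hps.tendstoUniformlyOn' hr'R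
    have h2 : TendstoUniformlyOn (fun N y => p.partialSum N (y - 0)) f atTop
        (closedBall (0:ℂ) 2) := h1.mono (fun x hx => by
      rw [mem_ball, dist_zero_right, hr'e]
      have : ‖x‖ ≤ 2 := by simpa [dist_zero_right] using hx
      linarith)
    apply h2.congr
    filter_upwards with N
    intro y _
    show p.partialSum N (y - 0) = S N y
    simp only [hS]
    rw [sub_zero, FormalMultilinearSeries.partialSum]
    apply Finset.sum_congr rfl
    intro n _
    rw [FormalMultilinearSeries.apply_eq_pow_smul_coeff, smul_eq_mul, mul_comm]
  -- limits of integrals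
  have T0 : Tendsto (fun N => ∑ n ∈ range N, ‖a n‖^2 * cc n 0) atTop
      (𝓝 (∫ ζ in closedBall (0:ℂ) 2, ‖ζ‖^0 * ‖f ζ‖^2)) := by
    have h := tendsto_int 0 S f hScont C hCb hu
    have he : (fun N => ∫ ζ in closedBall (0:ℂ) 2, ‖ζ‖^0 * ‖S N ζ‖^2)
        = fun N => ∑ n ∈ range N, ‖a n‖^2 * cc n 0 := funext fun N => poly_int a N 0
    rwa [he] at h
  have T1 : Tendsto (fun N => ∑ n ∈ range N, ‖a n‖^2 * cc n (2*k)) atTop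
      (𝓝 (∫ ζ in closedBall (0:ℂ) 2, ‖ζ‖^(2*k) * ‖f ζ‖^2)) := by
    have h := tendsto_int (2*k) S f hScont C hCb hu
    have he : (fun N => ∫ ζ in closedBall (0:ℂ) 2, ‖ζ‖^(2*k) * ‖S N ζ‖^2)
        = fun N => ∑ n ∈ range N, ‖a n‖^2 * cc n (2*k) := funext fun N => poly_int a N (2*k)
    rwa [he] at h
  have hgoal : ∫ ζ in closedBall (0:ℂ) 2, ‖f ζ‖ ^ 2
      = ∫ ζ in closedBall (0:ℂ) 2, ‖ζ‖^0 * ‖f ζ‖ ^ 2 := by simp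
  rw [hgoal]
  exact le_of_tendsto_of_tendsto' T0 (T1.const_mul _)
    (fun N => sum_ineq (fun n => ‖a n‖^2) (fun n => by positivity) N k)
end

section
/- Let n ≥ 1 and let k ≥ 0 be an integer. Let s and s̃ be holomorphic functions on an open neighborhood of the closed polydisk Δⁿ(0,2) = {z ∈ ℂⁿ : |z_ℓ| ≤ 2 for ℓ = 1,…,n} such that s(z) = z₁^k · s̃(z) for all z. Then ∫_{Δⁿ(0,2)} |s̃(z)|² dm(z) ≤ ((k+1)/2^{2k}) ∫_{Δⁿ(0,2)} |s(z)|² dm(z). -/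
open MeasureTheory Metric Set Complex
open scoped Real ENNReal NNReal

-- θ integral
lemma theta_int (m : ℤ) (hm : m ≠ 0) :
    ∫ θ in Set.Ioo (-π) π, Complex.exp ((m : ℂ) * θ * Complex.I) = 0 := by
  rw [← MeasureTheory.integral_Ioc_eq_integral_Ioo,
    ← intervalIntegral.integral_of_le (by linarith [Real.pi_pos] : -π ≤ π)]
  have hc : (m : ℂ) * Complex.I ≠ 0 := by
    simp [Complex.ext_iff, hm, Complex.I_ne_zero]
  have : ∀ θ : ℝ, (m : ℂ) * θ * Complex.I = ((m : ℂ) * Complex.I) * θ := by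
    intro θ; ring
  simp_rw [this]
  rw [integral_exp_mul_complex hc]
  have hx : Complex.exp ((m : ℂ) * Complex.I * (π:ℝ)) ^ 2 = 1 := by
    rw [← Complex.exp_nat_mul]
    push_cast
    have : (2 : ℂ) * ((m:ℂ) * Complex.I * (π:ℝ)) = (m : ℂ) * (2 * π * Complex.I) := by ring
    rw [this, Complex.exp_int_mul_two_pi_mul_I]
  have hxne : Complex.exp ((m : ℂ) * Complex.I * (π:ℝ)) ≠ 0 := Complex.exp_ne_zero _
  have h2 : Complex.exp ((m : ℂ) * Complex.I * (-π:ℝ)) =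
      (Complex.exp ((m : ℂ) * Complex.I * (π:ℝ)))⁻¹ := by
    push_cast
    rw [← Complex.exp_neg]; ring_nf
  rw [h2, div_eq_zero_iff]
  left
  field_simp
  linear_combination hx

lemma mono_int (a b : ℕ) :
    ∫ w in closedBall (0:ℂ) 2, w ^ a * (starRingEnd ℂ) w ^ b =
      if a = b then ((π : ℂ) * 4 ^ (a+1) / (a+1)) else 0 := by
  set g : ℂ → ℂ := fun w => w ^ a * (starRingEnd ℂ) w ^ b with hg
  have hmeas : MeasurableSet (closedBall (0:ℂ) 2) := measurableSet_closedBall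
  rw [← MeasureTheory.integral_indicator hmeas,
    ← Complex.integral_comp_polarCoord_symm (Set.indicator (closedBall (0:ℂ) 2) g)]
  have hT : MeasurableSet (polarCoord.target) := polarCoord.open_target.measurableSet
  have key : ∀ p ∈ polarCoord.target,
      p.1 • (Set.indicator (closedBall (0:ℂ) 2) g) (Complex.polarCoord.symm p) =
      (Set.Ioc (0:ℝ) 2 ×ˢ Set.Ioo (-π) π).indicator
        (fun p : ℝ × ℝ => ((p.1 : ℂ)) ^ (a+b+1) * Complex.exp (((a:ℂ) - b) * p.2 * Complex.I)) p := by
    intro p hp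
    rw [show polarCoord.target = Set.Ioi (0:ℝ) ×ˢ Set.Ioo (-π) π from rfl] at hp
    obtain ⟨hp1, hp2⟩ := hp
    have hsymm : Complex.polarCoord.symm p = (p.1 : ℂ) * Complex.exp ((p.2 : ℂ) * Complex.I) := by
      rw [Complex.polarCoord_symm_apply, Complex.exp_mul_I]
      push_cast; ring
    have habs : ‖Complex.polarCoord.symm p‖ = p.1 := by
      rw [hsymm, norm_mul, Complex.norm_exp_ofReal_mul_I, Complex.norm_real]
      simp [abs_of_pos (Set.mem_Ioi.1 hp1)]
    by_cases hle : p.1 ≤ 2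
    · rw [Set.indicator_of_mem, Set.indicator_of_mem]
      · rw [hg]
        simp only
        rw [hsymm]
        have hconj : (starRingEnd ℂ) ((p.1:ℂ) * Complex.exp ((p.2:ℂ) * Complex.I)) =
            (p.1:ℂ) * Complex.exp (-(p.2:ℂ) * Complex.I) := by
          rw [map_mul, Complex.conj_ofReal, ← Complex.exp_conj, map_mul, Complex.conj_I,
            Complex.conj_ofReal]
          congr 2
          ring
        rw [hconj, Complex.real_smul]
        have e1 : (p.1:ℂ) * (((p.1:ℂ) * Complex.exp ((p.2:ℂ) * Complex.I)) ^ a *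
            ((p.1:ℂ) * Complex.exp (-(p.2:ℂ) * Complex.I)) ^ b) =
            (p.1:ℂ)^(a+b+1) * (Complex.exp ((p.2:ℂ) * Complex.I) ^ a *
              Complex.exp (-(p.2:ℂ) * Complex.I) ^ b) := by ring
        rw [e1, ← Complex.exp_nat_mul, ← Complex.exp_nat_mul, ← Complex.exp_add]
        congr 2
        ring
      · exact ⟨Set.mem_Ioc.2 ⟨Set.mem_Ioi.1 hp1, hle⟩, hp2⟩
      · rw [mem_closedBall_zero_iff, habs]; exact hle
    · rw [Set.indicator_of_notMem, Set.indicator_of_notMem]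
      · simp
      · intro h; exact hle (Set.mem_Ioc.1 h.1).2
      · rw [mem_closedBall_zero_iff, habs]; exact hle
  rw [MeasureTheory.setIntegral_congr_fun hT key]
  have hsub : (Set.Ioc (0:ℝ) 2 ×ˢ Set.Ioo (-π) π) ⊆ polarCoord.target := by
    rw [show polarCoord.target = Set.Ioi (0:ℝ) ×ˢ Set.Ioo (-π) π from rfl]
    exact Set.prod_mono (fun x hx => Set.mem_Ioi.2 (Set.mem_Ioc.1 hx).1) subset_rfl
  rw [MeasureTheory.setIntegral_indicator (by
      exact (measurableSet_Ioc).prod (measurableSet_Ioo))]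
  rw [Set.inter_eq_right.2 hsub]
  rw [show (volume : Measure (ℝ × ℝ)) = (volume : Measure ℝ).prod (volume : Measure ℝ) from rfl]
  rw [MeasureTheory.setIntegral_prod_mul (fun r : ℝ => ((r:ℂ))^(a+b+1))
    (fun θ : ℝ => Complex.exp (((a:ℂ) - b) * θ * Complex.I))]
  by_cases hab : a = b
  · subst hab
    simp only [sub_self, zero_mul, Complex.exp_zero]
    rw [MeasureTheory.integral_const]
    have h1 : ∫ r in Set.Ioc (0:ℝ) 2, ((r:ℂ))^(a+a+1) = ((4:ℂ)^(a+1)/(2*(a:ℂ)+2)) := by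
      have : ∀ r : ℝ, ((r:ℂ))^(a+a+1) = ((r^(a+a+1) : ℝ) : ℂ) := by intro r; push_cast; ring
      simp_rw [this]
      rw [show (∫ r in Set.Ioc (0:ℝ) 2, ((r^(a+a+1) : ℝ) : ℂ)) =
          ((∫ r in Set.Ioc (0:ℝ) 2, r^(a+a+1) : ℝ) : ℂ) from integral_ofReal (𝕜 := ℂ)]
      rw [← intervalIntegral.integral_of_le (by norm_num : (0:ℝ) ≤ 2), integral_pow]
      have h2 : ((2:ℝ) ^ (a+a+1+1) - 0 ^ (a+a+1+1)) / (↑(a+a+1) + 1) =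
          (4:ℝ)^(a+1) / (2*(a:ℝ)+2) := by
        rw [zero_pow (by omega), show a+a+1+1 = 2*(a+1) by ring, pow_mul]
        push_cast
        norm_num
        ring_nf
      rw [h2]
      push_cast
      ring
    rw [h1]
    rw [measureReal_def, Measure.restrict_apply_univ, Real.volume_Ioo]
    have : (π : ℝ) - (-π) = 2*π := by ring
    rw [this]
    rw [ENNReal.toReal_ofReal (by positivity)]
    simp only [if_true]
    rw [Complex.real_smul]
    push_cast
    have : ((a:ℂ)+1) ≠ 0 := by
      intro h
      have := congrArg Complex.re h
      push_cast at this
      norm_num at this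
      linarith [Nat.cast_nonneg (α := ℝ) a]
    have h4 : (2 + (a:ℂ)*2) ≠ 0 := by
      intro h
      have := congrArg Complex.re h
      push_cast at this
      norm_num at this
      linarith [Nat.cast_nonneg (α := ℝ) a]
    have h5 : (2+(a:ℂ)*2) * (2+(a:ℂ)*2)⁻¹ = 1 := mul_inv_cancel₀ h4
    field_simp
  · have hm : ((a:ℤ) - b) ≠ 0 := by
      intro h; apply hab; omega
    have : ∀ θ : ℝ, ((a:ℂ) - b) * θ * Complex.I = (((a:ℤ)-(b:ℤ) : ℤ) : ℂ) * θ * Complex.I := by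
      intro θ; push_cast; ring
    simp_rw [this]
    rw [theta_int _ hm]
    rw [if_neg hab, mul_zero]

lemma parseval (f : ℂ → ℂ) (p : FormalMultilinearSeries ℂ ℂ ℂ) (R : NNReal) (hR : (2:NNReal) < R)
    (hp : HasFPowerSeriesOnBall f p 0 R) (k : ℕ) :
    HasSum (fun j : ℕ => ‖p.coeff j‖^2 * (π * 4^(j+k+1)/(j+k+1)))
      (∫ w in closedBall (0:ℂ) 2, ‖w‖^(2*k) * ‖f w‖^2) := by
  set D := closedBall (0:ℂ) 2 with hD
  have hDmeas : MeasurableSet D := measurableSet_closedBall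
  have hDcpt : IsCompact D := isCompact_closedBall _ _
  set c : ℕ → ℂ := fun j => p.coeff j with hc
  -- summability of coefficients
  have hsum2 : Summable (fun j => ‖c j‖ * 2^j) := by
    have h2R : ((2:NNReal) : ℝ≥0∞) < p.radius :=
      lt_of_lt_of_le (by exact_mod_cast hR) hp.r_le
    have := p.summable_norm_mul_pow h2R
    simpa [FormalMultilinearSeries.norm_apply_eq_norm_coef] using this
  set M : ℝ := ∑' j, ‖c j‖ * 2^j with hM
  have hMnonneg : 0 ≤ M := tsum_nonneg (fun j => by positivity)
  set S : ℕ → ℂ → ℂ := fun N w => ∑ j ∈ Finset.range N, c j * w^j with hS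
  have hSbound : ∀ N, ∀ w ∈ D, ‖S N w‖ ≤ M := by
    intro N w hw
    rw [mem_closedBall_zero_iff] at hw
    calc ‖S N w‖ ≤ ∑ j ∈ Finset.range N, ‖c j * w^j‖ := norm_sum_le _ _
      _ ≤ ∑ j ∈ Finset.range N, ‖c j‖ * 2^j := by
          apply Finset.sum_le_sum
          intro j _
          rw [norm_mul, norm_pow]
          exact mul_le_mul_of_nonneg_left (pow_le_pow_left₀ (norm_nonneg w) hw j)
            (norm_nonneg _)
      _ ≤ M := hsum2.sum_le_tsum _ (fun j _ => by positivity)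
  have hSconv : ∀ w ∈ D, Filter.Tendsto (fun N => S N w) Filter.atTop (nhds (f w)) := by
    intro w hw
    rw [mem_closedBall_zero_iff] at hw
    have hw' : w ∈ Metric.eball (0:ℂ) R := by
      rw [EMetric.mem_ball, edist_zero_right]
      exact lt_of_le_of_lt (ENNReal.coe_le_coe.2 (show ‖w‖₊ ≤ 2 by exact_mod_cast hw))
        (ENNReal.coe_lt_coe.2 hR)
    have h1 := (hp.hasSum hw').tendsto_sum_nat
    rw [zero_add] at h1
    convert h1 using 2 with N
    apply Finset.sum_congr rfl
    intro j _
    rw [FormalMultilinearSeries.apply_eq_pow_smul_coeff, smul_eq_mul]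
    ring
  -- integrability of monomials
  have hint : ∀ (a b : ℕ), IntegrableOn (fun w : ℂ => w^a * (starRingEnd ℂ) w^b) D volume := by
    intro a b
    exact (((continuous_pow a).mul (Complex.continuous_conj.pow b)).continuousOn).integrableOn_compact hDcpt
  -- Claim 1 : the integral of partial sums
  have claim1 : ∀ N, (∫ w in D, ‖w‖^(2*k) * ‖S N w‖^2)
      = ∑ j ∈ Finset.range N, ‖c j‖^2 * (π * 4^(j+k+1)/(j+k+1)) := by
    intro N
    have cast1 : ∀ w : ℂ, ((‖w‖^(2*k) * ‖S N w‖^2 : ℝ) : ℂ) =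
        ∑ j ∈ Finset.range N, ∑ l ∈ Finset.range N,
          (c j * (starRingEnd ℂ) (c l)) * (w^(j+k) * (starRingEnd ℂ) w^(l+k)) := by
      intro w
      have h1 : ((‖w‖^(2*k) * ‖S N w‖^2 : ℝ) : ℂ) =
          (w * (starRingEnd ℂ) w)^k * (S N w * (starRingEnd ℂ) (S N w)) := by
        rw [Complex.mul_conj, Complex.mul_conj]
        rw [Complex.normSq_eq_norm_sq, Complex.normSq_eq_norm_sq]
        push_cast
        try rw [pow_mul]
        try push_cast
        try ring
      rw [h1]
      have hconjS : (starRingEnd ℂ) (S N w) =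
          ∑ l ∈ Finset.range N, (starRingEnd ℂ) (c l) * (starRingEnd ℂ) w ^ l := by
        rw [hS]
        simp only [map_sum, map_mul, map_pow]
      rw [hconjS, hS]
      simp only
      rw [Finset.sum_mul_sum, Finset.mul_sum]
      apply Finset.sum_congr rfl
      intro j _
      rw [Finset.mul_sum]
      apply Finset.sum_congr rfl
      intro l _
      rw [pow_add, pow_add]
      ring
    have h2 : ((∫ w in D, ‖w‖^(2*k) * ‖S N w‖^2 : ℝ) : ℂ)
        = ∑ j ∈ Finset.range N, ∑ l ∈ Finset.range N,
            (c j * (starRingEnd ℂ) (c l)) *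
              (∫ w in D, w^(j+k) * (starRingEnd ℂ) w^(l+k)) := by
      rw [show ((∫ w in D, ‖w‖^(2*k) * ‖S N w‖^2 : ℝ) : ℂ)
          = ∫ w in D, ((‖w‖^(2*k) * ‖S N w‖^2 : ℝ) : ℂ) from (integral_ofReal (𝕜 := ℂ)).symm]
      rw [integral_congr_ae (Filter.Eventually.of_forall cast1)]
      rw [integral_finset_sum _ (fun j _ => integrable_finset_sum _
        (fun l _ => ((hint (j+k) (l+k)).const_mul _)))]
      apply Finset.sum_congr rfl
      intro j _
      rw [integral_finset_sum _ (fun l _ => ((hint (j+k) (l+k)).const_mul _))]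
      apply Finset.sum_congr rfl
      intro l _
      rw [MeasureTheory.integral_const_mul]
    have h3 : ∀ j l : ℕ, (∫ w in D, w^(j+k) * (starRingEnd ℂ) w^(l+k)) =
        if j = l then ((π:ℂ) * 4^(j+k+1)/((j:ℂ)+(k:ℂ)+1)) else 0 := by
      intro j l
      rw [hD, mono_int]
      by_cases h : j = l
      · subst h
        rw [if_pos rfl, if_pos rfl]
        push_cast
        try ring_nf
      · rw [if_neg (by omega), if_neg h]
    rw [← Complex.ofReal_inj, h2]
    push_cast
    simp_rw [h3, mul_ite, mul_zero]
    apply Finset.sum_congr rfl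
    intro j hj
    rw [Finset.sum_ite_eq, if_pos hj]
    rw [Complex.mul_conj, Complex.normSq_eq_norm_sq]
    push_cast
    ring
  -- Claim 2 : convergence of the integrals
  have claim2 : Filter.Tendsto (fun N => ∫ w in D, ‖w‖^(2*k) * ‖S N w‖^2) Filter.atTop
      (nhds (∫ w in D, ‖w‖^(2*k) * ‖f w‖^2)) := by
    apply MeasureTheory.tendsto_integral_of_dominated_convergence
      (bound := fun _ => 2^(2*k) * M^2)
    · intro N
      apply Continuous.aestronglyMeasurable
      exact (continuous_norm.pow _).mul ((continuous_finset_sum _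
        (fun j _ => continuous_const.mul (continuous_pow j))).norm.pow 2)
    · exact integrableOn_const measure_closedBall_lt_top.ne
    · intro N
      rw [MeasureTheory.ae_restrict_iff' hDmeas]
      apply Filter.Eventually.of_forall
      intro w hw
      have h1 : ‖w‖ ≤ 2 := mem_closedBall_zero_iff.1 hw
      rw [Real.norm_eq_abs,
        _root_.abs_of_nonneg (show (0:ℝ) ≤ ‖w‖^(2*k) * ‖S N w‖^2 by positivity)]
      apply mul_le_mul
      · exact pow_le_pow_left₀ (norm_nonneg w) h1 _
      · exact pow_le_pow_left₀ (norm_nonneg _) (hSbound N w hw) 2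
      · positivity
      · positivity
    · rw [MeasureTheory.ae_restrict_iff' hDmeas]
      apply Filter.Eventually.of_forall
      intro w hw
      exact Filter.Tendsto.const_mul _ (((hSconv w hw).norm).pow 2)
  -- conclude
  rw [funext claim1] at claim2
  set T : ℕ → ℝ := fun j => ‖c j‖^2 * (π * 4^(j+k+1)/(j+k+1)) with hT
  have hTnonneg : ∀ j, 0 ≤ T j := by
    intro j
    have : (0:ℝ) ≤ π := Real.pi_pos.le
    positivity
  have hmono : Monotone (fun N => ∑ j ∈ Finset.range N, T j) := by
    apply monotone_nat_of_le_succ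
    intro N
    rw [Finset.sum_range_succ]
    linarith [hTnonneg N]
  have hsumT : Summable T :=
    summable_of_sum_range_le hTnonneg (fun n => hmono.ge_of_tendsto claim2 n)
  have := hsumT.hasSum
  rwa [tendsto_nhds_unique hsumT.hasSum.tendsto_sum_nat claim2] at this

lemma core_one_var (k : ℕ) (f : ℂ → ℂ) (V : Set ℂ) (hV : IsOpen V)
    (hDV : closedBall (0:ℂ) 2 ⊆ V) (hf : DifferentiableOn ℂ f V) :
    ∫ w in closedBall (0:ℂ) 2, ‖f w‖^2 ≤
      ((k + 1 : ℝ) / 2 ^ (2*k)) * ∫ w in closedBall (0:ℂ) 2, ‖w^k * f w‖^2 := by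
  obtain ⟨δ, hδpos, hδ⟩ := (isCompact_closedBall (0:ℂ) 2).exists_cthickening_subset_open hV hDV
  have hsub : closedBall (0:ℂ) (2 + δ) ⊆ V := by
    refine subset_trans ?_ hδ
    rw [cthickening_closedBall hδpos.le (by norm_num)]
    exact subset_rfl.trans (by rw [add_comm])
  set R : NNReal := ⟨2 + δ, by positivity⟩ with hRdef
  have hR : (2 : NNReal) < R := by
    rw [← NNReal.coe_lt_coe]
    simp [hRdef]
    change (2:ℝ) < 2 + δ
    linarith
  have hf' : DifferentiableOn ℂ f (closedBall (0:ℂ) R) := hf.mono (by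
    exact hsub)
  have hp : HasFPowerSeriesOnBall f (cauchyPowerSeries f 0 R) 0 R :=
    hf'.hasFPowerSeriesOnBall (lt_trans (by norm_num) hR)
  set p := cauchyPowerSeries f 0 R
  have P0 := parseval f p R hR hp 0
  have Pk := parseval f p R hR hp k
  have e0 : (∫ w in closedBall (0:ℂ) 2, ‖w‖^(2*0) * ‖f w‖^2) =
      ∫ w in closedBall (0:ℂ) 2, ‖f w‖^2 := by
    apply integral_congr_ae
    apply Filter.Eventually.of_forall
    intro w
    norm_num
  have ek : (∫ w in closedBall (0:ℂ) 2, ‖w‖^(2*k) * ‖f w‖^2) =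
      ∫ w in closedBall (0:ℂ) 2, ‖w^k * f w‖^2 := by
    apply integral_congr_ae
    apply Filter.Eventually.of_forall
    intro w
    show ‖w‖^(2*k) * ‖f w‖^2 = ‖w^k * f w‖^2
    rw [norm_mul, norm_pow, mul_pow, ← pow_mul, mul_comm k 2]
  rw [e0] at P0
  simp only [Nat.add_zero, Nat.cast_zero, add_zero] at P0
  rw [ek] at Pk
  have Pk' := Pk.mul_left ((k + 1 : ℝ) / 2 ^ (2*k))
  apply hasSum_le _ P0 Pk'
  intro j
  have hπ : (0:ℝ) < π := Real.pi_pos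
  have h4 : (4:ℝ)^(j+k+1) = 4^(j+1) * 4^k := by rw [← pow_add]; ring_nf
  have h2k : (2:ℝ)^(2*k) = 4^k := by rw [pow_mul]; norm_num
  rw [h2k, h4]
  have hj1 : (0:ℝ) < (j:ℝ) + 1 := by positivity
  have hjk1 : (0:ℝ) < (j:ℝ) + k + 1 := by positivity
  have key : π * 4^(j+1) / ((j:ℝ)+1) ≤ ((k+1:ℝ)/4^k) * (π * (4^(j+1) * 4^k) / ((j:ℝ)+k+1)) := by
    have h4k : (0:ℝ) < 4^k := by positivity
    have hrhs : ((k+1:ℝ)/4^k) * (π * (4^(j+1) * 4^k) / ((j:ℝ)+(k:ℝ)+1)) =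
        ((k:ℝ)+1) * (π * 4^(j+1)) / ((j:ℝ)+(k:ℝ)+1) := by
      field_simp
    rw [hrhs, div_le_div_iff₀ hj1 hjk1]
    have hjk : (0:ℝ) ≤ (j:ℝ)*(k:ℝ) := by positivity
    have hpos : (0:ℝ) < π * 4^(j+1) := by positivity
    nlinarith [mul_nonneg hjk hpos.le]
  calc ‖p.coeff j‖^2 * (π * 4^(j+1)/((j:ℝ)+1))
      ≤ ‖p.coeff j‖^2 * (((k+1:ℝ)/4^k) * (π * (4^(j+1) * 4^k) / ((j:ℝ)+k+1))) :=
        mul_le_mul_of_nonneg_left key (by positivity)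
    _ = (k+1:ℝ)/4^k * (‖p.coeff j‖^2 * (π * (4^(j+1) * 4^k) / ((j:ℝ)+k+1))) := by ring


/-- If `s, s̃` are holomorphic on a neighborhood of the closed polydisk `Δⁿ(0,2)` and
`s(z) = z₁^k s̃(z)`, then `∫_{Δⁿ(0,2)} |s̃|² dm ≤ ((k+1)/2^{2k}) ∫_{Δⁿ(0,2)} |s|² dm`. -/
theorem integral_sq_factor_le
    (n : ℕ) (hn : 1 ≤ n) (k : ℕ)
    (s st : (Fin n → ℂ) → ℂ) (U : Set (Fin n → ℂ)) (hU : IsOpen U)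
    (hP : {z : Fin n → ℂ | ∀ ℓ, ‖z ℓ‖ ≤ 2} ⊆ U)
    (hs : DifferentiableOn ℂ s U) (hst : DifferentiableOn ℂ st U)
    (heq : ∀ z : Fin n → ℂ, s z = (z ⟨0, hn⟩) ^ k * st z) :
    ∫ z in {z : Fin n → ℂ | ∀ ℓ, ‖z ℓ‖ ≤ 2}, ‖st z‖ ^ 2 ≤
      ((k + 1 : ℝ) / 2 ^ (2 * k)) *
        ∫ z in {z : Fin n → ℂ | ∀ ℓ, ‖z ℓ‖ ≤ 2}, ‖s z‖ ^ 2 := by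
  obtain ⟨m, rfl⟩ : ∃ m, n = m + 1 := ⟨n - 1, by omega⟩
  set D := closedBall (0:ℂ) 2 with hDdef
  set S' : Set (Fin m → ℂ) := {z | ∀ ℓ, ‖z ℓ‖ ≤ 2} with hS'def
  set Sn : Set (Fin (m+1) → ℂ) := {z | ∀ ℓ, ‖z ℓ‖ ≤ 2} with hSndef
  set e := MeasurableEquiv.piFinSuccAbove (fun _ : Fin (m+1) => ℂ) 0 with hedef
  have mp := MeasureTheory.volume_preserving_piFinSuccAbove (fun _ : Fin (m+1) => ℂ) 0
  have hzero : (⟨0, hn⟩ : Fin (m+1)) = 0 := rfl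
  have hsymm : ∀ (w : ℂ) (z' : Fin m → ℂ), (e.symm (w, z') : Fin (m+1) → ℂ)
      = Fin.insertNth 0 w z' := fun _ _ => rfl
  have hsymm' : ∀ (w : ℂ) (z' : Fin m → ℂ), (e.symm (w, z') : Fin (m+1) → ℂ)
      = Fin.cons w z' := by
    intro w z'
    rw [hsymm, Fin.insertNth_zero']
  have hSpre : Sn = e ⁻¹' (D ×ˢ S') := by
    ext z
    simp only [hSndef, Set.mem_setOf_eq, Set.mem_preimage, Set.mem_prod, hedef,
      MeasurableEquiv.piFinSuccAbove_apply, hDdef, mem_closedBall_zero_iff, hS'def]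
    constructor
    · intro h
      exact ⟨h 0, fun j => h _⟩
    · rintro ⟨h0, h1⟩ ℓ
      rcases Fin.eq_zero_or_eq_succ ℓ with rfl | ⟨j, rfl⟩
      · exact h0
      · simpa [Fin.succAbove_zero, Fin.tail] using h1 j
  -- compactness
  have hS'eq : S' = Set.pi Set.univ (fun _ : Fin m => closedBall (0:ℂ) 2) := by
    ext z
    simp [hS'def, mem_closedBall_zero_iff]
  have hS'cpt : IsCompact S' := by
    rw [hS'eq]; exact isCompact_univ_pi (fun _ => isCompact_closedBall _ _)
  have hTcpt : IsCompact (D ×ˢ S') := (isCompact_closedBall _ _).prod hS'cpt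
  have hTmeas : MeasurableSet (D ×ˢ S') := hTcpt.measurableSet
  have hS'meas : MeasurableSet S' := hS'cpt.measurableSet
  -- continuity of insertion
  have hcont : Continuous (fun y : ℂ × (Fin m → ℂ) => (e.symm y : Fin (m+1) → ℂ)) := by
    have : ∀ y : ℂ × (Fin m → ℂ), (e.symm y : Fin (m+1) → ℂ) = Fin.insertNth 0 y.1 y.2 :=
      fun _ => rfl
    simp_rw [this]
    exact Continuous.finInsertNth 0 continuous_fst continuous_snd
  have hmem : ∀ y ∈ D ×ˢ S', (e.symm y : Fin (m+1) → ℂ) ∈ Sn := by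
    intro y hy
    rw [hSpre, Set.mem_preimage, e.apply_symm_apply]
    exact hy
  -- integrable
  have hFcont : ContinuousOn (fun y : ℂ × (Fin m → ℂ) => ‖st (e.symm y)‖^2) (D ×ˢ S') :=
    (((hst.continuousOn.mono hP).comp hcont.continuousOn (fun y hy => hmem y hy)).norm.pow 2)
  have hGcont : ContinuousOn (fun y : ℂ × (Fin m → ℂ) => ‖s (e.symm y)‖^2) (D ×ˢ S') :=
    (((hs.continuousOn.mono hP).comp hcont.continuousOn (fun y hy => hmem y hy)).norm.pow 2)
  have hFint : IntegrableOn (fun y : ℂ × (Fin m → ℂ) => ‖st (e.symm y)‖^2) (D ×ˢ S') :=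
    hFcont.integrableOn_compact hTcpt
  have hGint : IntegrableOn (fun y : ℂ × (Fin m → ℂ) => ‖s (e.symm y)‖^2) (D ×ˢ S') :=
    hGcont.integrableOn_compact hTcpt
  have hFint2 : Integrable (fun y : ℂ × (Fin m → ℂ) => ‖st (e.symm y)‖^2)
      ((volume.restrict D).prod (volume.restrict S')) := by
    rw [Measure.prod_restrict]; exact hFint
  have hGint2 : Integrable (fun y : ℂ × (Fin m → ℂ) => ‖s (e.symm y)‖^2)
      ((volume.restrict D).prod (volume.restrict S')) := by
    rw [Measure.prod_restrict]; exact hGint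
  -- step A : transfer to product
  have stepA : ∀ g : (Fin (m+1) → ℂ) → ℂ,
      ∫ z in Sn, ‖g z‖^2 = ∫ y in D ×ˢ S', ‖g (e.symm y)‖^2 := by
    intro g
    rw [hSpre]
    rw [← mp.setIntegral_preimage_emb e.measurableEmbedding
      (fun y => ‖g (e.symm y)‖^2) (D ×ˢ S')]
    apply integral_congr_ae
    apply Filter.Eventually.of_forall
    intro z
    show ‖g z‖^2 = ‖g (e.symm (e z))‖^2
    rw [MeasurableEquiv.symm_apply_apply]
  -- step B : Fubini
  have stepB : ∀ g : ℂ × (Fin m → ℂ) → ℝ,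
      Integrable g ((volume.restrict D).prod (volume.restrict S')) →
      ∫ y in D ×ˢ S', g y = ∫ z' in S', ∫ w in D, g (w, z') := by
    intro g hg
    rw [Measure.volume_eq_prod, ← Measure.prod_restrict]
    exact integral_prod_symm g hg
  -- step C : slice inequality
  have stepC : ∀ z' ∈ S',
      ∫ w in D, ‖st (e.symm (w, z'))‖^2 ≤
        ((k + 1 : ℝ) / 2 ^ (2*k)) * ∫ w in D, ‖s (e.symm (w, z'))‖^2 := by
    intro z' hz'
    set V : Set ℂ := (fun w : ℂ => (e.symm (w, z') : Fin (m+1) → ℂ)) ⁻¹' U with hVdef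
    have hwcont : Continuous (fun w : ℂ => (e.symm (w, z') : Fin (m+1) → ℂ)) :=
      hcont.comp (continuous_id.prodMk continuous_const)
    have hV : IsOpen V := hU.preimage hwcont
    have hDV : D ⊆ V := by
      intro w hw
      exact hP (hmem (w, z') ⟨hw, hz'⟩)
    have hdiff : Differentiable ℂ (fun w : ℂ => (e.symm (w, z') : Fin (m+1) → ℂ)) := by
      simp_rw [hsymm']
      apply differentiable_pi.2
      intro i
      refine Fin.cases ?_ ?_ i
      · simp only [Fin.cons_zero]
        exact differentiable_id
      · intro j
        simp only [Fin.cons_succ]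
        exact differentiable_const _
    have hfdiff : DifferentiableOn ℂ (fun w : ℂ => st (e.symm (w, z'))) V :=
      hst.comp hdiff.differentiableOn (fun w hw => hw)
    have hslice := core_one_var k (fun w : ℂ => st (e.symm (w, z'))) V hV hDV hfdiff
    have hseq : ∀ w : ℂ, s (e.symm (w, z')) = w^k * st (e.symm (w, z')) := by
      intro w
      rw [heq (e.symm (w, z')), hzero]
      congr 2
    calc ∫ w in D, ‖st (e.symm (w, z'))‖^2
        ≤ ((k + 1 : ℝ) / 2 ^ (2*k)) * ∫ w in D, ‖w^k * st (e.symm (w, z'))‖^2 := hslice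
      _ = ((k + 1 : ℝ) / 2 ^ (2*k)) * ∫ w in D, ‖s (e.symm (w, z'))‖^2 := by
          congr 1
          apply integral_congr_ae
          apply Filter.Eventually.of_forall
          intro w
          show ‖w^k * st (e.symm (w, z'))‖^2 = ‖s (e.symm (w, z'))‖^2
          rw [hseq w]
  -- assemble
  rw [stepA st, stepA s]
  rw [stepB _ hFint2, stepB _ hGint2]
  have hI1 : IntegrableOn (fun z' => ∫ w in D, ‖st (e.symm (w, z'))‖^2) S' :=
    hFint2.integral_prod_right
  have hI2 : IntegrableOn (fun z' => ((k + 1 : ℝ) / 2 ^ (2*k)) *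
      ∫ w in D, ‖s (e.symm (w, z'))‖^2) S' :=
    (hGint2.integral_prod_right).const_mul _
  calc ∫ z' in S', ∫ w in D, ‖st (e.symm (w, z'))‖^2
      ≤ ∫ z' in S', ((k + 1 : ℝ) / 2 ^ (2*k)) * ∫ w in D, ‖s (e.symm (w, z'))‖^2 :=
        setIntegral_mono_on hI1 hI2 hS'meas stepC
    _ = ((k + 1 : ℝ) / 2 ^ (2*k)) * ∫ z' in S', ∫ w in D, ‖s (e.symm (w, z'))‖^2 := by
        rw [MeasureTheory.integral_const_mul]
end

section
/- Let n ≥ 1 and let k ≥ 0 be an integer. Let s and s̃ be holomorphic functions on an open neighborhood of the closed polydisk Δⁿ(0,2) = {z ∈ ℂⁿ : |z_ℓ| ≤ 2 for ℓ = 1,…,n} such that s(z) = z₁^k · s̃(z) for all z. Then for every point x in the closed polydisk Δⁿ(0,1) one has |s(x)|² ≤ ((k+1)/2^{2k}) |x₁|^{2k} ∫_{Δⁿ(0,2)} |s(z)|² dm(z). -/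
open MeasureTheory Metric Real Set intervalIntegral

lemma stepA (g : ℂ → ℂ) (V : Set ℂ) (hV : IsOpen V) (hVb : closedBall (0:ℂ) 2 ⊆ V)
    (hg : DifferentiableOn ℂ g V) (x : ℂ) (hx : ‖x‖ ≤ 1) (R : ℝ)
    (hR : R ∈ Set.Icc (3/2:ℝ) 2) :
    π/2 * ‖g x‖^2 ≤ ∫ θ in (0:ℝ)..(2*π), ‖g (circleMap 0 R θ)‖^2 := by
  obtain ⟨hR1, hR2⟩ := hR
  have hball : closedBall (0:ℂ) R ⊆ V := fun z hz => hVb (by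
    simp only [mem_closedBall] at *; linarith)
  have hdc : DiffContOnCl ℂ (fun z => (g z)^2) (ball (0:ℂ) R) := by
    have hgd : DifferentiableOn ℂ (fun z => (g z)^2) V := fun z hz => ((hg z hz).pow 2)
    refine DifferentiableOn.diffContOnCl (hgd.mono ?_)
    rw [closure_ball (0:ℂ) (by positivity : (R:ℝ) ≠ 0)]
    exact hball
  have hxball : x ∈ ball (0:ℂ) R := by
    rw [mem_ball, Complex.dist_eq, sub_zero]
    calc ‖x‖ ≤ 1 := hx
    _ < R := by linarith
  have hcauchy := hdc.circleIntegral_sub_inv_smul hxball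
  have hgc : Continuous fun θ : ℝ => g (circleMap 0 R θ) :=
    hg.continuousOn.comp_continuous (continuous_circleMap 0 R)
      (fun θ => hball (circleMap_mem_closedBall 0 (by linarith) θ))
  have hInt : IntervalIntegrable (fun θ : ℝ => ‖g (circleMap 0 R θ)‖^2) volume 0 (2*π) :=
    ((hgc.norm).pow 2).intervalIntegrable _ _
  have hnz : ∀ θ : ℝ, (1:ℝ)/2 ≤ ‖circleMap 0 R θ - x‖ := by
    intro θ
    have h3 : ‖circleMap 0 R θ‖ = R := by
      rw [norm_circleMap_zero, abs_of_nonneg (by linarith)]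
    nlinarith [norm_sub_norm_le (circleMap 0 R θ) x]
  have h1 : ‖(∮ z in C(0, R), (z - x)⁻¹ • (g z)^2)‖ = 2*π*‖g x‖^2 := by
    rw [hcauchy, norm_smul]
    simp [abs_of_nonneg Real.pi_pos.le, norm_pow]
  have hIntc : Continuous fun θ : ℝ =>
      deriv (circleMap 0 R) θ • ((circleMap 0 R θ - x)⁻¹ • (g (circleMap 0 R θ))^2) := by
    have hc1 : Continuous fun θ : ℝ => circleMap 0 R θ - x :=
      (continuous_circleMap 0 R).sub continuous_const
    have hc2 : Continuous fun θ : ℝ => (circleMap 0 R θ - x)⁻¹ := by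
      refine hc1.inv₀ fun θ => ?_
      intro h0
      have := hnz θ
      rw [h0] at this
      simp at this
      linarith
    have hder : Continuous fun θ : ℝ => deriv (circleMap 0 R) θ := by
      simp only [deriv_circleMap]
      exact (continuous_circleMap 0 R).mul continuous_const
    exact hder.smul (hc2.smul (hgc.pow 2))
  have h2 : ‖(∮ z in C(0, R), (z - x)⁻¹ • (g z)^2)‖
      ≤ ∫ θ in (0:ℝ)..(2*π), 4*‖g (circleMap 0 R θ)‖^2 := by
    rw [circleIntegral]
    refine le_trans (intervalIntegral.norm_integral_le_integral_norm (by positivity)) ?_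
    refine intervalIntegral.integral_mono_on (by positivity)
      (hIntc.norm.intervalIntegrable _ _) (hInt.const_mul 4) fun θ _ => ?_
    rw [norm_smul, norm_smul, deriv_circleMap, norm_inv]
    have h4 : ‖circleMap 0 R θ * Complex.I‖ = R := by
      simp [abs_of_nonneg (by linarith : (0:ℝ) ≤ R)]
    rw [h4, norm_pow]
    have h5 : ‖circleMap 0 R θ - x‖⁻¹ ≤ 2 := by
      rw [inv_le_comm₀ (lt_of_lt_of_le (by norm_num) (hnz θ)) (by norm_num)]
      linarith [hnz θ]
    have h6 : (0:ℝ) ≤ ‖g (circleMap 0 R θ)‖^2 := by positivity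
    have h7 : ‖circleMap 0 R θ - x‖⁻¹ * ‖g (circleMap 0 R θ)‖^2 ≤ 2 * ‖g (circleMap 0 R θ)‖^2 :=
      mul_le_mul_of_nonneg_right h5 h6
    have h8 : (0:ℝ) ≤ ‖circleMap 0 R θ - x‖⁻¹ := inv_nonneg.mpr (norm_nonneg _)
    nlinarith [mul_nonneg h8 h6]
  rw [intervalIntegral.integral_const_mul] at h2
  rw [h1] at h2
  nlinarith [Real.pi_pos, sq_nonneg (‖g x‖)]

lemma oneVar (j : ℕ) (g : ℂ → ℂ) (V : Set ℂ) (hV : IsOpen V) (hVb : closedBall (0:ℂ) 2 ⊆ V)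
    (hg : DifferentiableOn ℂ g V) (x : ℂ) (hx : ‖x‖ ≤ 1) :
    ‖g x‖^2 ≤ ((j+1:ℝ)/4^j) * ∫ ζ in closedBall (0:ℂ) 2, ‖ζ‖^(2*j) * ‖g ζ‖^2 := by
  set w : ℂ → ℝ := fun ζ => ‖ζ‖^(2*j) * ‖g ζ‖^2 with hw
  have hwc : ContinuousOn w (closedBall (0:ℂ) 2) := by
    exact ((continuous_norm.pow _).continuousOn.mul
      (((hg.continuousOn.mono hVb).norm).pow 2))
  have hInt : IntegrableOn w (closedBall (0:ℂ) 2) :=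
    hwc.integrableOn_compact (isCompact_closedBall _ _)
  have hw0 : ∀ ζ, 0 ≤ w ζ := fun ζ => by positivity
  -- the annulus
  set A : Set ℂ := closedBall (0:ℂ) 2 \ ball 0 (3/2) with hA
  have hAm : MeasurableSet A := measurableSet_closedBall.diff measurableSet_ball
  have hmono : ∫ ζ in A, w ζ ≤ ∫ ζ in closedBall (0:ℂ) 2, w ζ := by
    refine setIntegral_mono_set hInt ?_ ?_
    · exact Filter.Eventually.of_forall hw0
    · exact Filter.Eventually.of_forall fun ζ hζ => hζ.1
  -- polar coordinates
  have hsymm : ∀ r θ : ℝ, Complex.polarCoord.symm (r, θ) = circleMap 0 r θ := by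
    intro r θ
    simp [Complex.polarCoord_symm_apply, circleMap, Complex.exp_mul_I]
  set F : ℝ × ℝ → ℝ := fun p => p.1 * w (circleMap 0 p.1 p.2) with hF
  have hsub : (Icc (3/2:ℝ) 2 ×ˢ Ioo (-π) π) ⊆ polarCoord.target := by
    rw [(rfl : polarCoord.target = Ioi (0:ℝ) ×ˢ Ioo (-π) π)]
    refine Set.prod_mono (fun r hr => ?_) subset_rfl
    exact mem_Ioi.mpr (by linarith [hr.1])
  have hSm : MeasurableSet (Icc (3/2:ℝ) 2 ×ˢ Ioo (-π) π) :=
    measurableSet_Icc.prod measurableSet_Ioo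
  have hkey : ∫ ζ in A, w ζ = ∫ p in (Icc (3/2:ℝ) 2 ×ˢ Ioo (-π) π), F p := by
    rw [← MeasureTheory.integral_indicator hAm, ← Complex.integral_comp_polarCoord_symm]
    have e0 : ∫ p in polarCoord.target,
        (Icc (3/2:ℝ) 2 ×ˢ Ioo (-π) π).indicator F p
        = ∫ p in (Icc (3/2:ℝ) 2 ×ˢ Ioo (-π) π), F p := by
      rw [setIntegral_indicator hSm, Set.inter_eq_self_of_subset_right hsub]
    rw [← e0]
    have htgt : polarCoord.target = Ioi (0:ℝ) ×ˢ Ioo (-π) π := rfl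
    refine setIntegral_congr_fun (by
      rw [htgt]
      exact measurableSet_Ioi.prod measurableSet_Ioo) ?_
    rintro ⟨r, θ⟩ hp
    rw [htgt] at hp
    obtain ⟨hr, hθ⟩ := hp
    simp only [mem_Ioi] at hr
    have hnorm : ‖Complex.polarCoord.symm (r, θ)‖ = r := by
      rw [Complex.norm_polarCoord_symm, abs_of_pos hr]
    dsimp only
    by_cases hmem : r ∈ Icc (3/2:ℝ) 2
    · have hmem' : Complex.polarCoord.symm (r, θ) ∈ A := by
        constructor
        · rw [mem_closedBall, Complex.dist_eq, sub_zero, hnorm]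
          exact hmem.2
        · rw [mem_ball, Complex.dist_eq, sub_zero, hnorm]
          push_neg
          exact hmem.1
      rw [indicator_of_mem hmem', indicator_of_mem (by exact ⟨hmem, hθ⟩)]
      simp only [smul_eq_mul, hF, hsymm]
    · have hmem' : Complex.polarCoord.symm (r, θ) ∉ A := by
        intro hc
        refine hmem ⟨?_, ?_⟩
        · have := hc.2
          rw [mem_ball, Complex.dist_eq, sub_zero, hnorm] at this
          linarith [not_lt.mp this]
        · have := hc.1
          rwa [mem_closedBall, Complex.dist_eq, sub_zero, hnorm] at this
      rw [indicator_of_notMem hmem', indicator_of_notMem (by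
        intro hc; exact hmem hc.1)]
      simp
  -- integrability of F on the rectangle
  have hFc : ContinuousOn F (Icc (3/2:ℝ) 2 ×ˢ Icc (-π) π) := by
    have hcm : Continuous fun p : ℝ × ℝ => circleMap 0 p.1 p.2 := by
      simp only [circleMap, zero_add]
      exact (Complex.continuous_ofReal.comp continuous_fst).mul
        ((Complex.continuous_ofReal.comp continuous_snd).mul continuous_const).cexp
    refine continuous_fst.continuousOn.mul ?_
    refine ContinuousOn.mul ?_ ?_
    · exact ((continuous_norm.comp hcm).pow _).continuousOn
    · refine ((hg.continuousOn.comp hcm.continuousOn ?_).norm).pow 2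
      rintro ⟨r, θ⟩ ⟨hr, _⟩
      apply hVb
      rw [mem_closedBall, Complex.dist_eq, sub_zero,
        norm_circleMap_zero, abs_of_nonneg (by linarith [hr.1] : (0:ℝ) ≤ r)]
      exact hr.2
  have hFint : IntegrableOn F (Icc (3/2:ℝ) 2 ×ˢ Ioo (-π) π) := by
    refine (hFc.integrableOn_compact (isCompact_Icc.prod isCompact_Icc)).mono_set ?_
    exact Set.prod_mono subset_rfl Ioo_subset_Icc_self
  -- Fubini
  have hfub : ∫ p in (Icc (3/2:ℝ) 2 ×ˢ Ioo (-π) π), F p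
      = ∫ r in Icc (3/2:ℝ) 2, ∫ θ in Ioo (-π) π, F (r, θ) := by
    rw [Measure.volume_eq_prod] at hFint ⊢
    exact setIntegral_prod F hFint
  -- inner integral bound
  have hinner : ∀ r ∈ Icc (3/2:ℝ) 2,
      r^(2*j+1) * (π/2 * ‖g x‖^2) ≤ ∫ θ in Ioo (-π) π, F (r, θ) := by
    intro r hr
    have hr0 : (0:ℝ) < r := by linarith [hr.1]
    have hFeq : ∀ θ : ℝ, F (r, θ) = r^(2*j+1) * ‖g (circleMap 0 r θ)‖^2 := by
      intro θ
      simp only [hF, hw]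
      rw [norm_circleMap_zero, abs_of_pos hr0]
      ring
    have hper : Function.Periodic (fun θ : ℝ => ‖g (circleMap 0 r θ)‖^2) (2*π) := by
      intro θ
      simp [periodic_circleMap 0 r θ]
    calc r^(2*j+1) * (π/2 * ‖g x‖^2)
        ≤ r^(2*j+1) * ∫ θ in (0:ℝ)..(2*π), ‖g (circleMap 0 r θ)‖^2 := by
          refine mul_le_mul_of_nonneg_left ?_ (by positivity)
          exact stepA g V hV hVb hg x hx r hr
      _ = ∫ θ in Ioo (-π) π, F (r, θ) := by
          have e1 : ∫ θ in (0:ℝ)..(2*π), ‖g (circleMap 0 r θ)‖^2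
              = ∫ θ in (-π)..π, ‖g (circleMap 0 r θ)‖^2 := by
            have := hper.intervalIntegral_add_eq (-π) 0
            simpa [(by ring : -π + 2*π = π), zero_add] using this.symm
          rw [e1, intervalIntegral.integral_of_le (by linarith [pi_pos] : -π ≤ π),
            integral_Ioc_eq_integral_Ioo, ← MeasureTheory.integral_const_mul]
          refine setIntegral_congr_fun measurableSet_Ioo fun θ _ => ?_
          rw [hFeq θ]
  -- outer bound
  have hIntInner : IntegrableOn (fun r => ∫ θ in Ioo (-π) π, F (r, θ)) (Icc (3/2:ℝ) 2) := by
    rw [Measure.volume_eq_prod] at hFint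
    rw [IntegrableOn, ← Measure.prod_restrict] at hFint
    exact hFint.integral_prod_left
  have houter : ∫ r in Icc (3/2:ℝ) 2, (r^(2*j+1) * (π/2 * ‖g x‖^2))
      ≤ ∫ r in Icc (3/2:ℝ) 2, ∫ θ in Ioo (-π) π, F (r, θ) := by
    refine setIntegral_mono_on ?_ hIntInner measurableSet_Icc hinner
    exact (((continuous_pow _).mul continuous_const).continuousOn).integrableOn_compact
      isCompact_Icc
  have hpowint : ∫ r in Icc (3/2:ℝ) 2, (r^(2*j+1) * (π/2 * ‖g x‖^2))
      = ((2:ℝ)^(2*j+2) - (3/2:ℝ)^(2*j+2))/(2*j+2) * (π/2 * ‖g x‖^2) := by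
    rw [integral_Icc_eq_integral_Ioc, ← intervalIntegral.integral_of_le (by norm_num : (3/2:ℝ) ≤ 2)]
    rw [intervalIntegral.integral_mul_const, integral_pow]
    push_cast
    ring_nf
  -- put everything together
  have hlow : ((2:ℝ)^(2*j+2) - (3/2:ℝ)^(2*j+2))/(2*j+2) * (π/2 * ‖g x‖^2)
      ≤ ∫ ζ in closedBall (0:ℂ) 2, w ζ := by
    rw [← hpowint]
    calc _ ≤ ∫ r in Icc (3/2:ℝ) 2, ∫ θ in Ioo (-π) π, F (r, θ) := houter
      _ = ∫ p in (Icc (3/2:ℝ) 2 ×ˢ Ioo (-π) π), F p := hfub.symm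
      _ = ∫ ζ in A, w ζ := hkey.symm
      _ ≤ _ := hmono
  -- numeric estimate
  have h4j : (0:ℝ) < 4^j := by positivity
  have hj1 : (0:ℝ) < (j:ℝ) + 1 := by positivity
  have hG : (0:ℝ) ≤ ‖g x‖^2 := by positivity
  have hpi : (3:ℝ) < π := pi_gt_three
  have hnum : (7/4:ℝ) * 4^j ≤ (2:ℝ)^(2*j+2) - (3/2:ℝ)^(2*j+2) := by
    have e2 : (2:ℝ)^(2*j+2) = 4 * 4^j := by
      rw [pow_add, pow_mul]; norm_num; ring
    have e3 : (3/2:ℝ)^(2*j+2) = (9/4) * (9/4)^j := by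
      rw [pow_add, pow_mul]; norm_num; ring
    have e4 : ((9:ℝ)/4)^j ≤ 4^j := pow_le_pow_left₀ (by norm_num) (by norm_num) j
    rw [e2, e3]
    nlinarith
  have h2m : (0:ℝ) < 2*(j:ℝ)+2 := by positivity
  have hstep : (4^j/((j:ℝ)+1)) * ‖g x‖^2 ≤ ∫ ζ in closedBall (0:ℂ) 2, w ζ := by
    refine le_trans ?_ hlow
    have t1 : (7/4:ℝ)*4^j/(2*(j:ℝ)+2)*(π/2*‖g x‖^2)
        ≤ ((2:ℝ)^(2*j+2) - (3/2:ℝ)^(2*j+2))/(2*(j:ℝ)+2)*(π/2*‖g x‖^2) := by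
      refine mul_le_mul_of_nonneg_right ((div_le_div_iff_of_pos_right h2m).mpr hnum) ?_
      positivity
    refine le_trans ?_ (le_trans t1 (le_of_eq (by push_cast; ring_nf)))
    have e5 : (7/4:ℝ)*4^j/(2*(j:ℝ)+2)*(π/2*‖g x‖^2)
        = (7*π/16)*((4^j/((j:ℝ)+1))*‖g x‖^2) := by
      field_simp
      ring
    rw [e5]
    have hd : (0:ℝ) ≤ (4^j/((j:ℝ)+1))*‖g x‖^2 := by positivity
    nlinarith
  have efin : ((j:ℝ)+1)/4^j * ((4^j/((j:ℝ)+1)) * ‖g x‖^2) = ‖g x‖^2 := by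
    field_simp
  calc ‖g x‖^2 = ((j:ℝ)+1)/4^j * ((4^j/((j:ℝ)+1)) * ‖g x‖^2) := efin.symm
    _ ≤ ((j:ℝ)+1)/4^j * ∫ ζ in closedBall (0:ℂ) 2, w ζ := by
        refine mul_le_mul_of_nonneg_left hstep (by positivity)

lemma Pset_eq (m : ℕ) : {z : Fin m → ℂ | ∀ ℓ, ‖z ℓ‖ ≤ 2}
    = Set.pi univ (fun _ => closedBall (0:ℂ) 2) := by
  ext z
  simp [Complex.dist_eq, mem_closedBall]

lemma Pset_meas (m : ℕ) : MeasurableSet {z : Fin m → ℂ | ∀ ℓ, ‖z ℓ‖ ≤ 2} := by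
  rw [Pset_eq]
  exact MeasurableSet.univ_pi fun _ => measurableSet_closedBall

lemma Pset_compact (m : ℕ) : IsCompact {z : Fin m → ℂ | ∀ ℓ, ‖z ℓ‖ ≤ 2} := by
  rw [Pset_eq]
  exact isCompact_univ_pi fun _ => isCompact_closedBall _ _

lemma mainInd : ∀ (n : ℕ) (h : (Fin n → ℂ) → ℂ) (W : Set (Fin n → ℂ)), IsOpen W →
    {z : Fin n → ℂ | ∀ ℓ, ‖z ℓ‖ ≤ 2} ⊆ W → DifferentiableOn ℂ h W →
    ∀ (j : Fin n → ℕ) (x : Fin n → ℂ), (∀ ℓ, ‖x ℓ‖ ≤ 1) →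
    ‖h x‖^2 ≤ (∏ ℓ, ((j ℓ + 1 : ℝ)/4^(j ℓ))) *
      ∫ z in {z : Fin n → ℂ | ∀ ℓ, ‖z ℓ‖ ≤ 2}, (∏ ℓ, ‖z ℓ‖^(2 * j ℓ)) * ‖h z‖^2 := by
  intro n
  induction n with
  | zero =>
    intro h W hW hPW hh j x hx
    have hset : {z : Fin 0 → ℂ | ∀ ℓ, ‖z ℓ‖ ≤ 2} = univ := by
      ext z; simp [Fin.forall_fin_zero_pi]
    rw [hset, Measure.restrict_univ]
    rw [integral_unique]
    have hvol : (volume : Measure (Fin 0 → ℂ)) univ = 1 := by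
      rw [MeasureTheory.volume_pi, Measure.pi_univ]
      simp
    rw [measureReal_def, hvol]
    have hxd : x = default := Subsingleton.elim _ _
    simp only [Finset.univ_eq_empty, Finset.prod_empty, one_mul, smul_eq_mul, ENNReal.toReal_one,
      hxd]
    exact le_of_eq (by norm_num [Subsingleton.elim (@default (Fin 0 → ℂ) Pi.instInhabited) (@default (Fin 0 → ℂ) Unique.instInhabited)])
  | succ n IH =>
    intro h W hW hPW hh j x hx
    set P1 : Set (Fin (n+1) → ℂ) := {z | ∀ ℓ, ‖z ℓ‖ ≤ 2} with hP1
    set Pn : Set (Fin n → ℂ) := {z | ∀ ℓ, ‖z ℓ‖ ≤ 2} with hPn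
    set x' : Fin n → ℂ := fun i => x i.succ with hx'
    have hx'le : ∀ i, ‖x' i‖ ≤ 1 := fun i => hx i.succ
    have hconsP : ∀ (ζ : ℂ), ‖ζ‖ ≤ 2 → ∀ z' ∈ Pn, (Fin.cons ζ z' : Fin (n+1) → ℂ) ∈ P1 := by
      intro ζ hζ z' hz' ℓ
      refine Fin.cases ?_ (fun i => ?_) ℓ
      · simpa using hζ
      · simpa using hz' i
    have hcons_cont : Continuous (fun p : ℂ × (Fin n → ℂ) => (Fin.cons p.1 p.2 : Fin (n+1) → ℂ)) := by
      refine continuous_pi fun i => ?_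
      refine Fin.cases ?_ (fun p => ?_) i
      · simpa using continuous_fst
      · simp only [Fin.cons_succ]; exact (continuous_apply p).comp continuous_snd
    have hdiff1 : Differentiable ℂ (fun ζ : ℂ => (Fin.cons ζ x' : Fin (n+1) → ℂ)) := by
      rw [differentiable_pi]
      intro i
      refine Fin.cases ?_ (fun p => ?_) i
      · simpa using differentiable_id
      · simpa using differentiable_const (x' p)
    set g : ℂ → ℂ := fun ζ => h (Fin.cons ζ x') with hg
    set V : Set ℂ := (fun ζ : ℂ => (Fin.cons ζ x' : Fin (n+1) → ℂ)) ⁻¹' W with hV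
    have hVo : IsOpen V := hW.preimage hdiff1.continuous
    have hVb : closedBall (0:ℂ) 2 ⊆ V := by
      intro ζ hζ
      exact hPW (hconsP ζ (by simpa [Complex.dist_eq] using hζ) x'
        (fun i => le_trans (hx'le i) one_le_two))
    have hgd : DifferentiableOn ℂ g V :=
      hh.comp hdiff1.differentiableOn (fun ζ hζ => hζ)
    set C0 : ℝ := ((j 0 + 1 : ℝ)/4^(j 0)) with hC0
    set C' : ℝ := ∏ i : Fin n, ((j i.succ + 1 : ℝ)/4^(j i.succ)) with hC'
    have hC'0 : (0:ℝ) ≤ C' := Finset.prod_nonneg fun i _ => by positivity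
    have hC00 : (0:ℝ) ≤ C0 := by positivity
    set Φ : ℂ × (Fin n → ℂ) → ℝ := fun p =>
      ‖p.1‖^(2 * j 0) * ((∏ i : Fin n, ‖p.2 i‖^(2 * j i.succ)) * ‖h (Fin.cons p.1 p.2)‖^2)
      with hΦ
    have hΦc : ContinuousOn Φ (closedBall (0:ℂ) 2 ×ˢ Pn) := by
      have h1 : ∀ p ∈ (closedBall (0:ℂ) 2 ×ˢ Pn), (Fin.cons p.1 p.2 : Fin (n+1) → ℂ) ∈ W :=
        fun p hp => hPW (hconsP p.1 (by simpa [Complex.dist_eq] using hp.1) p.2 hp.2)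
      refine ContinuousOn.mul ?_ (ContinuousOn.mul ?_ ?_)
      · exact ((continuous_norm.comp continuous_fst).pow _).continuousOn
      · refine Continuous.continuousOn ?_
        refine continuous_finset_prod _ fun i _ => ?_
        exact (((continuous_apply i).comp continuous_snd).norm.pow _)
      · exact ((hh.continuousOn.comp hcons_cont.continuousOn h1).norm).pow 2
    have hΦint : IntegrableOn Φ (closedBall (0:ℂ) 2 ×ˢ Pn) :=
      hΦc.integrableOn_compact ((isCompact_closedBall _ _).prod (Pset_compact n))
    set Ψ : ℂ → ℝ := fun ζ => ∫ z' in Pn, Φ (ζ, z') with hΨ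
    have hΨint : IntegrableOn Ψ (closedBall (0:ℂ) 2) := by
      have hΦint' := hΦint
      rw [Measure.volume_eq_prod] at hΦint'
      rw [IntegrableOn, ← Measure.prod_restrict] at hΦint'
      exact hΦint'.integral_prod_left
    have hpt : ∀ ζ ∈ closedBall (0:ℂ) 2, ‖ζ‖^(2 * j 0) * ‖g ζ‖^2 ≤ C' * Ψ ζ := by
      intro ζ hζ
      have hζ2 : ‖ζ‖ ≤ 2 := by simpa [Complex.dist_eq] using hζ
      set Wζ : Set (Fin n → ℂ) := (fun z' => (Fin.cons ζ z' : Fin (n+1) → ℂ)) ⁻¹' W with hWζ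
      have hdiff2 : Differentiable ℂ (fun z' : Fin n → ℂ => (Fin.cons ζ z' : Fin (n+1) → ℂ)) := by
        rw [differentiable_pi]
        intro i
        refine Fin.cases ?_ (fun p => ?_) i
        · simpa using differentiable_const ζ
        · simp only [Fin.cons_succ]
          exact (ContinuousLinearMap.proj p : (Fin n → ℂ) →L[ℂ] ℂ).differentiable
      have hWζo : IsOpen Wζ := hW.preimage hdiff2.continuous
      have hWζb : Pn ⊆ Wζ := fun z' hz' => hPW (hconsP ζ hζ2 z' hz')
      have hIH := IH (fun z' => h (Fin.cons ζ z')) Wζ hWζo hWζb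
        (hh.comp hdiff2.differentiableOn (fun z' hz' => hz')) (fun i => j i.succ) x' hx'le
      have hnn : (0:ℝ) ≤ ‖ζ‖^(2 * j 0) := by positivity
      have hmul := mul_le_mul_of_nonneg_left hIH hnn
      refine le_trans (le_of_eq ?_) (le_trans hmul (le_of_eq ?_))
      · rw [hg]
      · have ePsi : Ψ ζ = ‖ζ‖^(2 * j 0) *
            ∫ z' in Pn, (∏ i : Fin n, ‖z' i‖^(2 * j i.succ)) * ‖h (Fin.cons ζ z')‖^2 := by
          rw [hΨ]
          simp only [hΦ]
          exact MeasureTheory.integral_const_mul _ _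
        rw [ePsi]
        ring
    have hgInt : IntegrableOn (fun ζ => ‖ζ‖^(2 * j 0) * ‖g ζ‖^2) (closedBall (0:ℂ) 2) :=
      (((continuous_norm.pow _).continuousOn.mul
        (((hgd.continuousOn.mono hVb).norm).pow 2))).integrableOn_compact
        (isCompact_closedBall _ _)
    have hmono2 : ∫ ζ in closedBall (0:ℂ) 2, ‖ζ‖^(2 * j 0) * ‖g ζ‖^2
        ≤ ∫ ζ in closedBall (0:ℂ) 2, C' * Ψ ζ :=
      setIntegral_mono_on hgInt (hΨint.const_mul C') measurableSet_closedBall hpt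
    have hfub : ∫ ζ in closedBall (0:ℂ) 2, Ψ ζ = ∫ p in (closedBall (0:ℂ) 2 ×ˢ Pn), Φ p := by
      have hΦint' := hΦint
      rw [Measure.volume_eq_prod] at hΦint' ⊢
      exact (setIntegral_prod Φ hΦint').symm
    set e := MeasurableEquiv.piFinSuccAbove (fun _ : Fin (n+1) => ℂ) 0 with he
    have hmp := MeasureTheory.volume_preserving_piFinSuccAbove (fun _ : Fin (n+1) => ℂ) 0
    have heapp : ∀ z : Fin (n+1) → ℂ, e z = (z 0, fun i => z i.succ) := by
      intro z
      rw [he, MeasurableEquiv.piFinSuccAbove_apply]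
      refine Prod.ext rfl ?_
      funext i
      show z ((0 : Fin (n+1)).succAbove i) = z i.succ
      rw [Fin.zero_succAbove]
    have hpre : e ⁻¹' (closedBall (0:ℂ) 2 ×ˢ Pn) = P1 := by
      ext z
      rw [mem_preimage, heapp z]
      constructor
      · rintro ⟨h1, h2⟩ ℓ
        refine Fin.cases ?_ (fun i => ?_) ℓ
        · simpa [Complex.dist_eq] using h1
        · exact h2 i
      · intro hz
        refine ⟨?_, fun i => hz i.succ⟩
        simpa [Complex.dist_eq] using hz 0
    have htrans : ∫ p in (closedBall (0:ℂ) 2 ×ˢ Pn), Φ p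
        = ∫ z in P1, (∏ ℓ, ‖z ℓ‖^(2 * j ℓ)) * ‖h z‖^2 := by
      rw [← hmp.setIntegral_preimage_emb e.measurableEmbedding Φ _, hpre]
      refine setIntegral_congr_fun (Pset_meas (n+1)) fun z hz => ?_
      rw [heapp z, hΦ]
      simp only []
      have hcz : (Fin.cons (z 0) (fun i => z i.succ) : Fin (n+1) → ℂ) = z := by
        funext ℓ
        refine Fin.cases ?_ (fun i => ?_) ℓ
        · simp
        · simp
      rw [hcz, Fin.prod_univ_succ]
      ring
    have h1var := oneVar (j 0) g V hVo hVb hgd (x 0) (hx 0)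
    calc ‖h x‖^2 = ‖g (x 0)‖^2 := by
          rw [hg]
          dsimp only
          rw [show (Fin.cons (x 0) x' : Fin (n+1) → ℂ) = x from Fin.cons_self_tail x]
      _ ≤ C0 * ∫ ζ in closedBall (0:ℂ) 2, ‖ζ‖^(2 * j 0) * ‖g ζ‖^2 := h1var
      _ ≤ C0 * ∫ ζ in closedBall (0:ℂ) 2, C' * Ψ ζ := mul_le_mul_of_nonneg_left hmono2 hC00
      _ = C0 * (C' * ∫ ζ in closedBall (0:ℂ) 2, Ψ ζ) := by
          rw [MeasureTheory.integral_const_mul]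
      _ = (C0 * C') * ∫ z in P1, (∏ ℓ, ‖z ℓ‖^(2 * j ℓ)) * ‖h z‖^2 := by
          rw [hfub, htrans]
          ring
      _ = (∏ ℓ, ((j ℓ + 1 : ℝ)/4^(j ℓ))) *
            ∫ z in P1, (∏ ℓ, ‖z ℓ‖^(2 * j ℓ)) * ‖h z‖^2 := by
          rw [Fin.prod_univ_succ]


open Metric in
/-- If `s, s̃` are holomorphic on a neighborhood of the closed polydisk `Δⁿ(0,2)` and
`s(z) = z₁^k s̃(z)`, then for every `x ∈ Δⁿ(0,1)` one has
`|s(x)|² ≤ ((k+1)/2^{2k}) |x₁|^{2k} ∫_{Δⁿ(0,2)} |s|² dm`. -/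
theorem pointwise_sq_le_of_factor
    (n : ℕ) (hn : 1 ≤ n) (k : ℕ)
    (s st : (Fin n → ℂ) → ℂ) (U : Set (Fin n → ℂ)) (hU : IsOpen U)
    (hP : {z : Fin n → ℂ | ∀ ℓ, ‖z ℓ‖ ≤ 2} ⊆ U)
    (hs : DifferentiableOn ℂ s U) (hst : DifferentiableOn ℂ st U)
    (heq : ∀ z : Fin n → ℂ, s z = (z ⟨0, hn⟩) ^ k * st z) :
    ∀ x : Fin n → ℂ, (∀ ℓ, ‖x ℓ‖ ≤ 1) →
      ‖s x‖ ^ 2 ≤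
        ((k + 1 : ℝ) / 2 ^ (2 * k)) * ‖x ⟨0, hn⟩‖ ^ (2 * k) *
          ∫ z in {z : Fin n → ℂ | ∀ ℓ, ‖z ℓ‖ ≤ 2}, ‖s z‖ ^ 2 := by
  intro x hx
  set i0 : Fin n := ⟨0, hn⟩ with hi0
  set j : Fin n → ℕ := fun ℓ => if ℓ = i0 then k else 0 with hj
  have hm := mainInd n st U hU hP hst j x hx
  have hprodC : (∏ ℓ, ((j ℓ + 1 : ℝ)/4^(j ℓ))) = (k+1:ℝ)/4^k := by
    rw [Finset.prod_eq_single i0]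
    · simp [hj]
    · intro b _ hb
      simp [hj, hb]
    · intro hb
      exact absurd (Finset.mem_univ i0) hb
  have hprodW : ∀ z : Fin n → ℂ, (∏ ℓ, ‖z ℓ‖^(2 * j ℓ)) = ‖z i0‖^(2*k) := by
    intro z
    rw [Finset.prod_eq_single i0]
    · simp [hj]
    · intro b _ hb
      simp [hj, hb]
    · intro hb
      exact absurd (Finset.mem_univ i0) hb
  have hSq : ∀ z : Fin n → ℂ, ‖z i0‖^(2*k) * ‖st z‖^2 = ‖s z‖^2 := by
    intro z
    rw [heq z, norm_mul, mul_pow, norm_pow, ← pow_mul, mul_comm k 2]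
  have hint : ∫ z in {z : Fin n → ℂ | ∀ ℓ, ‖z ℓ‖ ≤ 2}, (∏ ℓ, ‖z ℓ‖^(2*j ℓ)) * ‖st z‖^2
      = ∫ z in {z : Fin n → ℂ | ∀ ℓ, ‖z ℓ‖ ≤ 2}, ‖s z‖^2 :=
    MeasureTheory.setIntegral_congr_fun (Pset_meas n) fun z _ => by rw [hprodW z, hSq z]
  rw [hprodC, hint] at hm
  have hxnn : (0:ℝ) ≤ ‖x i0‖^(2*k) := by positivity
  have hmul := mul_le_mul_of_nonneg_left hm hxnn
  calc ‖s x‖^2 = ‖x i0‖^(2*k) * ‖st x‖^2 := (hSq x).symm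
    _ ≤ ‖x i0‖^(2*k) * ((k+1:ℝ)/4^k * ∫ z in {z : Fin n → ℂ | ∀ ℓ, ‖z ℓ‖ ≤ 2}, ‖s z‖^2) := hmul
    _ = ((k + 1 : ℝ)/2^(2*k)) * ‖x i0‖^(2*k) *
          ∫ z in {z : Fin n → ℂ | ∀ ℓ, ‖z ℓ‖ ≤ 2}, ‖s z‖^2 := by
        rw [show (2:ℝ)^(2*k) = 4^k by rw [pow_mul]; norm_num]
        ring
end

section
/- Let n ≥ 1, r > 0, and let λ₁,…,λₙ be nonnegative real numbers. Let s be a holomorphic function on an open neighborhood of the closed polydisk Δⁿ(0,r) = {z ∈ ℂⁿ : |z_ℓ| ≤ r for ℓ = 1,…,n}. Then |s(0)|² · ∫_{Δⁿ(0,r)} exp(−2 ∑_{ℓ=1}^{n} λ_ℓ |z_ℓ|²) dm(z) ≤ ∫_{Δⁿ(0,r)} |s(z)|² exp(−2 ∑_{ℓ=1}^{n} λ_ℓ |z_ℓ|²) dm(z). -/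
open MeasureTheory Metric Complex Set

lemma circle_submean (f : ℂ → ℂ) (hf : DifferentiableOn ℂ f (closedBall 0 1)) :
    ‖f 0‖ * (2 * Real.pi) ≤ ∫ θ in (0:ℝ)..(2 * Real.pi), ‖f (circleMap 0 1 θ)‖ := by
  have h0 : (0:ℂ) ∈ ball (0:ℂ) 1 := by simp
  have hC := hf.circleIntegral_sub_inv_smul h0
  have hkey : ∀ θ : ℝ, deriv (circleMap 0 1) θ • ((circleMap 0 1 θ - 0)⁻¹ • f (circleMap 0 1 θ))
      = I * f (circleMap 0 1 θ) := by
    intro θ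
    have hne : circleMap 0 1 θ ≠ 0 := circleMap_ne_center one_ne_zero
    rw [deriv_circleMap, sub_zero, smul_eq_mul, smul_eq_mul]
    field_simp
  rw [circleIntegral] at hC
  simp only [hkey] at hC
  rw [intervalIntegral.integral_const_mul] at hC
  have h2 : (∫ θ in (0:ℝ)..(2 * Real.pi), f (circleMap 0 1 θ)) = (2 * Real.pi : ℝ) * f 0 := by
    have hI : (I : ℂ) ≠ 0 := I_ne_zero
    apply mul_left_cancel₀ hI
    rw [hC, smul_eq_mul]
    push_cast
    ring
  have hle : ‖∫ θ in (0:ℝ)..(2 * Real.pi), f (circleMap 0 1 θ)‖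
      ≤ ∫ θ in (0:ℝ)..(2 * Real.pi), ‖f (circleMap 0 1 θ)‖ :=
    intervalIntegral.norm_integral_le_integral_norm (by positivity)
  rw [h2] at hle
  calc ‖f 0‖ * (2 * Real.pi) = ‖((2 * Real.pi : ℝ) : ℂ) * f 0‖ := by
        rw [norm_mul, Complex.norm_real, Real.norm_eq_abs,
          _root_.abs_of_nonneg (by positivity : (0:ℝ) ≤ 2 * Real.pi)]
        ring
    _ ≤ _ := hle

lemma circle_submean_sq (f : ℂ → ℂ) (hf : DifferentiableOn ℂ f (closedBall 0 1)) :
    ‖f 0‖ ^ 2 * (2 * Real.pi) ≤ ∫ θ in (0:ℝ)..(2 * Real.pi), ‖f (circleMap 0 1 θ)‖ ^ 2 := by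
  have h := circle_submean (fun z => f z * f z) (hf.mul hf)
  calc ‖f 0‖ ^ 2 * (2 * Real.pi) = ‖f 0 * f 0‖ * (2 * Real.pi) := by rw [norm_mul, sq]
    _ ≤ ∫ θ in (0:ℝ)..(2 * Real.pi), ‖f (circleMap 0 1 θ) * f (circleMap 0 1 θ)‖ := h
    _ = _ := by
        apply intervalIntegral.integral_congr
        intro θ _
        simp only [norm_mul, sq]

/-- Sub-averaging inequality with Gaussian weight on a polydisk: for `s` holomorphic on a
neighborhood of `Δⁿ(0,r)` and `λ_ℓ ≥ 0`,
`|s(0)|² ∫_{Δⁿ(0,r)} e^{-2 ∑ λ_ℓ |z_ℓ|²} dm ≤ ∫_{Δⁿ(0,r)} |s|² e^{-2 ∑ λ_ℓ |z_ℓ|²} dm`. -/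
theorem subaveraging_gaussian_polydisk (n : ℕ) (hn : 1 ≤ n) (r : ℝ) (hr : 0 < r)
    (lam : Fin n → ℝ) (hlam : ∀ ℓ, 0 ≤ lam ℓ)
    (s : (Fin n → ℂ) → ℂ) (U : Set (Fin n → ℂ)) (hU : IsOpen U)
    (hP : {z : Fin n → ℂ | ∀ ℓ, ‖z ℓ‖ ≤ r} ⊆ U)
    (hs : DifferentiableOn ℂ s U) :
    ‖s 0‖ ^ 2 *
        ∫ z in {z : Fin n → ℂ | ∀ ℓ, ‖z ℓ‖ ≤ r},
          Real.exp (-2 * ∑ ℓ, lam ℓ * ‖z ℓ‖ ^ 2) ≤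
      ∫ z in {z : Fin n → ℂ | ∀ ℓ, ‖z ℓ‖ ≤ r},
        ‖s z‖ ^ 2 * Real.exp (-2 * ∑ ℓ, lam ℓ * ‖z ℓ‖ ^ 2) := by
  classical
  set P : Set (Fin n → ℂ) := {z : Fin n → ℂ | ∀ ℓ, ‖z ℓ‖ ≤ r} with hPdef
  set w : (Fin n → ℂ) → ℝ := fun z => Real.exp (-2 * ∑ ℓ, lam ℓ * ‖z ℓ‖ ^ 2) with hwdef
  have hw_cont : Continuous w := by
    apply Real.continuous_exp.comp
    apply Continuous.mul continuous_const
    apply continuous_finset_sum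
    intro ℓ _
    exact continuous_const.mul ((continuous_norm.comp (continuous_apply ℓ)).pow 2)
  have hw_nonneg : ∀ z, 0 ≤ w z := fun z => (Real.exp_pos _).le
  have hPball : P = closedBall (0 : Fin n → ℂ) r := by
    ext z
    simp only [hPdef, mem_setOf_eq, mem_closedBall, dist_zero_right]
    exact (pi_norm_le_iff_of_nonneg hr.le).symm
  have hPc : IsCompact P := by rw [hPball]; exact isCompact_closedBall _ _
  have hPm : MeasurableSet P := hPc.isClosed.measurableSet
  have hsc : ContinuousOn s U := hs.continuousOn
  -- rotation invariance
  have hrot : ∀ c : ℂ, ‖c‖ = 1 →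
      (∫⁻ z in P, ENNReal.ofReal (‖s (fun ℓ => c * z ℓ)‖ ^ 2 * w z)) =
      ∫⁻ z in P, ENNReal.ofReal (‖s z‖ ^ 2 * w z) := by
    intro c hc
    have hc0 : c ≠ 0 := by
      intro h; rw [h, norm_zero] at hc; exact zero_ne_one hc
    have hcn : ∀ a : ℂ, ‖c * a‖ = ‖a‖ := fun a => by rw [norm_mul, hc, one_mul]
    set cc : Circle := ⟨c, mem_sphere_zero_iff_norm.mpr hc⟩ with hccdef
    have hmp1 : MeasurePreserving (fun a : ℂ => c * a) volume volume := by
      have h1 := (rotation cc).measurePreserving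
      have h2 : ⇑(rotation cc) = fun a : ℂ => c * a := by
        funext a; rw [rotation_apply]
      rwa [h2] at h1
    have hmp : MeasurePreserving (fun z : Fin n → ℂ => fun ℓ => c * z ℓ) volume volume :=
      volume_preserving_pi (fun _ : Fin n => hmp1)
    have hemb : MeasurableEmbedding (fun z : Fin n → ℂ => fun ℓ => c * z ℓ) := by
      have h : (fun z : Fin n → ℂ => fun ℓ => c * z ℓ) = fun z : Fin n → ℂ => c • z := by
        funext z ℓ; simp
      rw [h]
      exact (Homeomorph.smulOfNeZero c hc0).measurableEmbedding
    have hpre : (fun z : Fin n → ℂ => fun ℓ => c * z ℓ) ⁻¹' P = P := by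
      ext z
      simp only [Set.mem_preimage, hPdef, Set.mem_setOf_eq, hcn]
    have hwT : ∀ z : Fin n → ℂ, w (fun ℓ => c * z ℓ) = w z := by
      intro z; simp only [hwdef, hcn]
    have hkey := hmp.setLIntegral_comp_preimage_emb hemb
      (fun y => ENNReal.ofReal (‖s y‖ ^ 2 * w y)) P
    rw [hpre] at hkey
    rw [← hkey]
    apply lintegral_congr
    intro z
    simp only [hwT]
  -- pointwise circle submean
  have hpt : ∀ z ∈ P, ENNReal.ofReal (‖s 0‖ ^ 2 * (2 * Real.pi)) ≤
      ∫⁻ θ in Set.Ioc (0:ℝ) (2 * Real.pi),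
        ENNReal.ofReal (‖s (fun ℓ => circleMap 0 1 θ * z ℓ)‖ ^ 2) := by
    intro z hz
    set f : ℂ → ℂ := fun u => s (fun ℓ => u * z ℓ) with hfdef
    have hmaps : ∀ u : ℂ, ‖u‖ ≤ 1 → (fun ℓ => u * z ℓ) ∈ U := by
      intro u hu
      apply hP
      intro ℓ
      calc ‖u * z ℓ‖ = ‖u‖ * ‖z ℓ‖ := norm_mul _ _
        _ ≤ 1 * r := mul_le_mul hu (hz ℓ) (norm_nonneg _) zero_le_one
        _ = r := one_mul r
    have hL : Differentiable ℂ (fun u : ℂ => fun ℓ => u * z ℓ) :=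
      differentiable_pi.mpr fun ℓ => differentiable_id.mul_const (z ℓ)
    have hfd : DifferentiableOn ℂ f (closedBall 0 1) := by
      apply hs.comp hL.differentiableOn
      intro u hu
      exact hmaps u (by simpa [dist_zero_right] using hu)
    have hf0 : f 0 = s 0 := by
      simp only [hfdef]
      congr 1
      funext ℓ
      simp
    have hsub := circle_submean_sq f hfd
    rw [hf0] at hsub
    have hcm : ∀ θ : ℝ, ‖circleMap 0 1 θ‖ = 1 := by
      intro θ
      simpa using abs_circleMap_zero 1 θ
    have hcont : Continuous fun θ : ℝ => ‖f (circleMap 0 1 θ)‖ ^ 2 := by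
      have h1 : Continuous fun θ : ℝ => (fun ℓ => circleMap 0 1 θ * z ℓ) := by
        apply continuous_pi
        intro ℓ
        exact (continuous_circleMap 0 1).mul continuous_const
      have h2 : Continuous fun θ : ℝ => s (fun ℓ => circleMap 0 1 θ * z ℓ) := by
        rw [← continuousOn_univ]
        apply hsc.comp h1.continuousOn
        intro θ _
        exact hmaps _ (hcm θ).le
      exact h2.norm.pow 2
    rw [intervalIntegral.integral_of_le (by positivity : (0:ℝ) ≤ 2 * Real.pi)] at hsub
    have heq : ENNReal.ofReal (∫ θ in Set.Ioc (0:ℝ) (2 * Real.pi), ‖f (circleMap 0 1 θ)‖ ^ 2) =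
        ∫⁻ θ in Set.Ioc (0:ℝ) (2 * Real.pi), ENNReal.ofReal (‖f (circleMap 0 1 θ)‖ ^ 2) := by
      apply ofReal_integral_eq_lintegral_ofReal
      · exact (hcont.integrableOn_Ioc)
      · exact Filter.Eventually.of_forall fun θ => by positivity
    calc ENNReal.ofReal (‖s 0‖ ^ 2 * (2 * Real.pi))
        ≤ ENNReal.ofReal (∫ θ in Set.Ioc (0:ℝ) (2 * Real.pi), ‖f (circleMap 0 1 θ)‖ ^ 2) :=
          ENNReal.ofReal_le_ofReal hsub
      _ = _ := heq
  -- Tonelli measurability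
  have hGm : AEMeasurable (fun p : (Fin n → ℂ) × ℝ =>
      ENNReal.ofReal (‖s (fun ℓ => circleMap 0 1 p.2 * p.1 ℓ)‖ ^ 2 * w p.1))
      ((volume.restrict P).prod (volume.restrict (Set.Ioc (0:ℝ) (2 * Real.pi)))) := by
    rw [Measure.prod_restrict]
    have hm : Continuous fun p : (Fin n → ℂ) × ℝ => (fun ℓ => circleMap 0 1 p.2 * p.1 ℓ) := by
      apply continuous_pi
      intro ℓ
      exact ((continuous_circleMap 0 1).comp continuous_snd).mul
        ((continuous_apply ℓ).comp continuous_fst)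
    have hcont : ContinuousOn (fun p : (Fin n → ℂ) × ℝ =>
        ‖s (fun ℓ => circleMap 0 1 p.2 * p.1 ℓ)‖ ^ 2 * w p.1)
        (P ×ˢ Set.Ioc (0:ℝ) (2 * Real.pi)) := by
      apply ContinuousOn.mul
      · apply ContinuousOn.pow
        apply ContinuousOn.norm
        apply hsc.comp hm.continuousOn
        intro p hp
        apply hP
        intro ℓ
        have h1 : ‖circleMap 0 1 p.2‖ = 1 := by simpa using abs_circleMap_zero 1 p.2
        rw [norm_mul, h1, one_mul]
        exact hp.1 ℓ
      · exact (hw_cont.comp continuous_fst).continuousOn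
    exact (hcont.aemeasurable (hPm.prod measurableSet_Ioc)).ennreal_ofReal
  have h2pi0 : ENNReal.ofReal (2 * Real.pi) ≠ 0 := by
    rw [Ne, ENNReal.ofReal_eq_zero, not_le]
    positivity
  -- main ennreal inequality
  have key : ENNReal.ofReal (‖s 0‖ ^ 2) * ∫⁻ z in P, ENNReal.ofReal (w z) ≤
      ∫⁻ z in P, ENNReal.ofReal (‖s z‖ ^ 2 * w z) := by
    have main : (ENNReal.ofReal (‖s 0‖ ^ 2) * ∫⁻ z in P, ENNReal.ofReal (w z)) *
          ENNReal.ofReal (2 * Real.pi)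
        ≤ (∫⁻ z in P, ENNReal.ofReal (‖s z‖ ^ 2 * w z)) * ENNReal.ofReal (2 * Real.pi) := by
      calc (ENNReal.ofReal (‖s 0‖ ^ 2) * ∫⁻ z in P, ENNReal.ofReal (w z)) *
            ENNReal.ofReal (2 * Real.pi)
          = ∫⁻ z in P, ENNReal.ofReal (‖s 0‖ ^ 2 * (2 * Real.pi)) * ENNReal.ofReal (w z) := by
            rw [lintegral_const_mul' _ _ (ENNReal.ofReal_ne_top)]
            rw [mul_right_comm, ← ENNReal.ofReal_mul (by positivity)]
        _ ≤ ∫⁻ z in P, (∫⁻ θ in Set.Ioc (0:ℝ) (2 * Real.pi),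
              ENNReal.ofReal (‖s (fun ℓ => circleMap 0 1 θ * z ℓ)‖ ^ 2)) *
                ENNReal.ofReal (w z) := by
            apply setLIntegral_mono' hPm
            intro z hz
            exact mul_le_mul_left (hpt z hz) _
        _ = ∫⁻ z in P, ∫⁻ θ in Set.Ioc (0:ℝ) (2 * Real.pi),
              ENNReal.ofReal (‖s (fun ℓ => circleMap 0 1 θ * z ℓ)‖ ^ 2 * w z) := by
            apply lintegral_congr
            intro z
            rw [← lintegral_mul_const' (ENNReal.ofReal (w z)) _ ENNReal.ofReal_ne_top]
            apply lintegral_congr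
            intro θ
            rw [← ENNReal.ofReal_mul (by positivity)]
        _ = ∫⁻ θ in Set.Ioc (0:ℝ) (2 * Real.pi), ∫⁻ z in P,
              ENNReal.ofReal (‖s (fun ℓ => circleMap 0 1 θ * z ℓ)‖ ^ 2 * w z) :=
            lintegral_lintegral_swap hGm
        _ = ∫⁻ _θ in Set.Ioc (0:ℝ) (2 * Real.pi), ∫⁻ z in P,
              ENNReal.ofReal (‖s z‖ ^ 2 * w z) := by
            apply lintegral_congr
            intro θ
            exact hrot (circleMap 0 1 θ) (by simpa using abs_circleMap_zero 1 θ)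
        _ = (∫⁻ z in P, ENNReal.ofReal (‖s z‖ ^ 2 * w z)) * ENNReal.ofReal (2 * Real.pi) := by
            rw [setLIntegral_const, Real.volume_Ioc, sub_zero]
    exact (ENNReal.mul_le_mul_iff_left h2pi0 ENNReal.ofReal_ne_top).mp main
  -- back to Bochner integrals
  have hW_int : IntegrableOn w P volume := hw_cont.continuousOn.integrableOn_compact hPc
  have hg_int : IntegrableOn (fun z => ‖s z‖ ^ 2 * w z) P volume := by
    apply ContinuousOn.integrableOn_compact hPc
    exact (((hsc.mono hP).norm).pow 2).mul hw_cont.continuousOn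
  have hg_fin : (∫⁻ z in P, ENNReal.ofReal (‖s z‖ ^ 2 * w z)) ≠ ⊤ :=
    ((lintegral_ofReal_le_lintegral_enorm _).trans_lt hg_int.2).ne
  have hW_fin : (∫⁻ z in P, ENNReal.ofReal (w z)) ≠ ⊤ :=
    ((lintegral_ofReal_le_lintegral_enorm _).trans_lt hW_int.2).ne
  rw [integral_eq_lintegral_of_nonneg_ae (Filter.Eventually.of_forall fun z => hw_nonneg z)
      hw_cont.aestronglyMeasurable.restrict,
    integral_eq_lintegral_of_nonneg_ae
      (Filter.Eventually.of_forall fun z => by positivity) hg_int.1]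
  calc ‖s 0‖ ^ 2 * (∫⁻ z in P, ENNReal.ofReal (w z)).toReal
      = (ENNReal.ofReal (‖s 0‖ ^ 2) * ∫⁻ z in P, ENNReal.ofReal (w z)).toReal := by
        rw [ENNReal.toReal_mul, ENNReal.toReal_ofReal (by positivity)]
    _ ≤ (∫⁻ z in P, ENNReal.ofReal (‖s z‖ ^ 2 * w z)).toReal :=
        ENNReal.toReal_mono hg_fin key
end
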